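/- arXiv:2007.05862 — 2 statements merged into one kernel-verified Lean document; each statement's English description precedes it below -/
import Mathlib

section
/- Let X be an irreducible shift of finite type, Y a sofic shift, pi: X -> Y an almost invertible factor code, and mu a fully supported, shift-invariant, ergodic, T_X-nonsingular measure on X. Then the pushforward nu = pi_* mu is T_Y-nonsingular. Moreover, if mu is a Gibbs measure for an additive cocycle phi on T_X, then nu is a Gibbs measure for the cocycle phi o (pi^{-1} x pi^{-1}), where pi^{-1} is defined nu-almost everywhere (on the doubly transitive points). -/
open MeasureTheory
open scoped ENNReal

/-- The left shift by `k` on bi-infinite sequences. `shiftZ 1` is the shift map `σ`. -/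
def shiftZ {A : Type*} (k : ℤ) (x : ℤ → A) : ℤ → A := fun n => x (n + k)

/-- The word `w` occurs in `x` at position `i`. -/
def occursAt {A : Type*} (x : ℤ → A) (w : List A) (i : ℤ) : Prop :=
  ∀ j : Fin w.length, x (i + (j.1 : ℤ)) = w.get j

/-- The word `w` belongs to the language of `X`. -/
def InLanguage {A : Type*} (X : Set (ℤ → A)) (w : List A) : Prop :=
  ∃ x ∈ X, ∃ i : ℤ, occursAt x w i

/-- A shift space: a closed, shift-invariant subset of the full shift. -/
def IsShiftSpace {A : Type*} [TopologicalSpace A] (X : Set (ℤ → A)) : Prop :=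
  IsClosed X ∧ ∀ k : ℤ, ∀ x ∈ X, shiftZ k x ∈ X

/-- `x` is doubly transitive in `X`. -/
def DoublyTransitive {A : Type*} (X : Set (ℤ → A)) (x : ℤ → A) : Prop :=
  ∀ w : List A, InLanguage X w →
    (∀ N : ℤ, ∃ i : ℤ, N ≤ i ∧ occursAt x w i) ∧
    (∀ N : ℤ, ∃ i : ℤ, i ≤ N ∧ occursAt x w i)

/-- Irreducibility: any two words of the language can be joined within the language. -/
def IrreducibleShift {A : Type*} (X : Set (ℤ → A)) : Prop :=
  ∀ u v : List A, InLanguage X u → InLanguage X v →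
    ∃ w : List A, InLanguage X (u ++ w ++ v)

/-- `μ` is fully supported on `X`: every open set meeting `X` has positive measure. -/
def FullSupportOn {A : Type*} [TopologicalSpace A] [MeasurableSpace A]
    (μ : Measure (ℤ → A)) (X : Set (ℤ → A)) : Prop :=
  ∀ U : Set (ℤ → A), IsOpen U → (U ∩ X).Nonempty → 0 < μ U

/-- The Gibbs (homoclinic/tail) relation on `X`. -/
def GibbsRel {A : Type*} (X : Set (ℤ → A)) (x y : ℤ → A) : Prop :=
  x ∈ X ∧ y ∈ X ∧ ∃ N : ℤ, ∀ n : ℤ, N < |n| → x n = y n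

/-- A shift of finite type: defined by excluding a finite set of words of some length `n`. -/
def IsSFT {A : Type*} (X : Set (ℤ → A)) : Prop :=
  ∃ (n : ℕ) (F : Finset (List A)),
    X = {x | ∀ i : ℤ, (List.ofFn fun j : Fin n => x (i + (j.1 : ℤ))) ∉ F}

/-- `μ` is nonsingular for the relation `Rel`: the saturation of any null Borel set is null. -/
def NonsingularFor {P : Type*} [MeasurableSpace P]
    (μ : Measure P) (Rel : P → P → Prop) : Prop :=
  ∀ S : Set P, MeasurableSet S → μ S = 0 → μ {y | ∃ x ∈ S, Rel x y} = 0

/-- A holonomy of the relation `Rel`: a Borel isomorphism `ψ : S → T` between Borel sets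
moving every point within its `Rel`-class. -/
def IsHolonomy {P : Type*} [MeasurableSpace P] (Rel : P → P → Prop)
    (S T : Set P) (ψ : P → P) : Prop :=
  MeasurableSet S ∧ MeasurableSet T ∧ Set.BijOn ψ S T ∧
  (∀ E : Set P, E ⊆ S → MeasurableSet E → MeasurableSet (ψ '' E)) ∧
  (∀ E : Set P, E ⊆ T → MeasurableSet E → MeasurableSet (S ∩ ψ ⁻¹' E)) ∧
  ∀ z ∈ S, Rel z (ψ z)

/-- `μ` is a Gibbs measure for the additive cocycle `φ` on the relation `Rel`: for every
holonomy `ψ : S → T` of `Rel`, the Radon-Nikodym derivative of `μ ∘ ψ` with respect to `μ`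
at `z` is `exp (φ z (ψ z))`. -/
def IsGibbsMeasure {P : Type*} [MeasurableSpace P] (μ : Measure P)
    (Rel : P → P → Prop) (φ : P → P → ℝ) : Prop :=
  ∀ S T ψ, IsHolonomy Rel S T ψ → ∀ E : Set P, E ⊆ S → MeasurableSet E →
    μ (ψ '' E) = ∫⁻ z in E, ENNReal.ofReal (Real.exp (φ z (ψ z))) ∂μ


open Set Function
set_option linter.unusedSectionVars false
set_option maxHeartbeats 1000000
lemma gibbsRel_symm {C : Type*} {X : Set (ℤ → C)} {x y : ℤ → C} (h : GibbsRel X x y) :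
    GibbsRel X y x := by
  obtain ⟨hx, hy, N, hN⟩ := h
  exact ⟨hy, hx, N, fun n hn => (hN n hn).symm⟩

section SB
variable {A B : Type*} [Fintype A] [TopologicalSpace A] [DiscreteTopology A]
    [Fintype B] [TopologicalSpace B] [DiscreteTopology B]

lemma exists_window (π : (ℤ → A) → (ℤ → B)) (hcont : Continuous π) :
    ∃ m : ℕ, ∀ x x' : ℤ → A, (∀ j : ℤ, |j| ≤ (m : ℤ) → x j = x' j) → π x 0 = π x' 0 := by
  by_contra hc
  push_neg at hc
  set V : ℕ → Set ((ℤ → A) × (ℤ → A)) := fun m =>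
    {p | (∀ j : ℤ, |j| ≤ (m : ℤ) → p.1 j = p.2 j) ∧ π p.1 0 ≠ π p.2 0} with hV
  have hclosed : ∀ m, IsClosed (V m) := by
    intro m
    have h1 : IsClosed {p : (ℤ → A) × (ℤ → A) | ∀ j : ℤ, |j| ≤ (m : ℤ) → p.1 j = p.2 j} := by
      have : {p : (ℤ → A) × (ℤ → A) | ∀ j : ℤ, |j| ≤ (m : ℤ) → p.1 j = p.2 j}
          = ⋂ (j : ℤ), ⋂ (_ : |j| ≤ (m : ℤ)), {p | p.1 j = p.2 j} := by
        ext p; simp [Set.mem_iInter]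
      rw [this]
      exact isClosed_iInter fun j => isClosed_iInter fun _ =>
        isClosed_eq ((continuous_apply j).comp continuous_fst)
          ((continuous_apply j).comp continuous_snd)
    have h2 : IsClosed {p : (ℤ → A) × (ℤ → A) | π p.1 0 ≠ π p.2 0} := by
      have : {p : (ℤ → A) × (ℤ → A) | π p.1 0 ≠ π p.2 0}
          = (fun p : (ℤ → A) × (ℤ → A) => (π p.1 0, π p.2 0)) ⁻¹' {q : B × B | q.1 = q.2}ᶜ := by
        ext p; simp [Set.mem_preimage]
      rw [this]
      have hco : Continuous (fun p : (ℤ → A) × (ℤ → A) => (π p.1 0, π p.2 0)) :=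
        (((continuous_apply 0).comp (hcont.comp continuous_fst)).prodMk
          ((continuous_apply 0).comp (hcont.comp continuous_snd)))
      exact (isClosed_discrete _).preimage hco
    exact h1.inter h2
  have hne : ∀ m, (V m).Nonempty := by
    intro m
    obtain ⟨x, x', hagree, hneq⟩ := hc m
    exact ⟨(x, x'), hagree, hneq⟩
  have hanti : ∀ m : ℕ, V (m + 1) ⊆ V m := by
    intro m p hp
    exact ⟨fun j hj => hp.1 j (le_trans hj (by exact_mod_cast Nat.le_succ m)), hp.2⟩
  obtain ⟨p, hp⟩ := IsCompact.nonempty_iInter_of_sequence_nonempty_isCompact_isClosed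
    V hanti hne ((hclosed 0).isCompact) hclosed
  simp only [Set.mem_iInter] at hp
  have : p.1 = p.2 := by
    funext j
    exact (hp j.natAbs).1 j (le_of_eq (Int.abs_eq_natAbs j))
  exact (hp 0).2 (by rw [this])

lemma shiftZ_shiftZ' {C : Type*} (a b : ℤ) (x : ℤ → C) : shiftZ a (shiftZ b x) = shiftZ (a + b) x := by
  funext n; simp [shiftZ, add_assoc]

@[simp] lemma shiftZ_zero' {C : Type*} (x : ℤ → C) : shiftZ 0 x = x := by funext n; simp [shiftZ]

section Equiv
variable {X : Set (ℤ → A)} {π : (ℤ → A) → (ℤ → B)}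
  (hXinv : ∀ k : ℤ, ∀ x ∈ X, shiftZ k x ∈ X)
  (hequiv : ∀ x ∈ X, π (shiftZ 1 x) = shiftZ 1 (π x))

include hXinv hequiv in
lemma equivZ : ∀ k : ℤ, ∀ x ∈ X, π (shiftZ k x) = shiftZ k (π x) := by
  have hpos : ∀ k : ℕ, ∀ x ∈ X, π (shiftZ (k : ℤ) x) = shiftZ (k : ℤ) (π x) := by
    intro k
    induction k with
    | zero => intro x _; simp
    | succ k ih =>
      intro x hx
      have h1 : ((k : ℤ) + 1) = ((k + 1 : ℕ) : ℤ) := by push_cast; ring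
      have : π (shiftZ 1 (shiftZ (k : ℤ) x)) = shiftZ 1 (π (shiftZ (k : ℤ) x)) :=
        hequiv _ (hXinv _ _ hx)
      rw [shiftZ_shiftZ'] at this
      rw [ih x hx, shiftZ_shiftZ'] at this
      rw [← h1]
      rw [add_comm] at this
      exact this
  intro k x hx
  rcases le_or_gt 0 k with hk | hk
  · obtain ⟨k', rfl⟩ := Int.eq_ofNat_of_zero_le hk
    exact hpos k' x hx
  · obtain ⟨k', hk'⟩ : ∃ k' : ℕ, k = -(k' : ℤ) := ⟨k.natAbs, by omega⟩
    subst hk'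
    have hx' : shiftZ (-(k' : ℤ)) x ∈ X := hXinv _ _ hx
    have := hpos k' _ hx'
    rw [shiftZ_shiftZ'] at this
    simp only [add_neg_cancel, shiftZ_zero'] at this
    rw [this, shiftZ_shiftZ']
    simp

include hXinv hequiv in
lemma localRule {m : ℕ}
    (hm : ∀ x x' : ℤ → A, (∀ j : ℤ, |j| ≤ (m : ℤ) → x j = x' j) → π x 0 = π x' 0)
    {x x' : ℤ → A} (hx : x ∈ X) (hx' : x' ∈ X) (k : ℤ)
    (hagree : ∀ j : ℤ, |j - k| ≤ (m : ℤ) → x j = x' j) : π x k = π x' k := by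
  have h1 : π (shiftZ k x) 0 = π (shiftZ k x') 0 := by
    apply hm
    intro j hj
    simp only [shiftZ]
    exact hagree (j + k) (by simpa using hj)
  rw [equivZ hXinv hequiv k x hx, equivZ hXinv hequiv k x' hx'] at h1
  simpa [shiftZ] using h1

end Equiv

lemma occursAt_ofFn (x : ℤ → A) (a : ℤ) (len : ℕ) :
    occursAt x (List.ofFn fun s : Fin len => x (a + (s.1 : ℤ))) a := by
  intro j
  have hlen : (List.ofFn fun s : Fin len => x (a + (s.1 : ℤ))).length = len := by simp
  rw [List.get_ofFn]
  simp

section DTI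
variable {X : Set (ℤ → A)} {Y : Set (ℤ → B)} {π : (ℤ → A) → (ℤ → B)}
  (hXinv : ∀ k : ℤ, ∀ x ∈ X, shiftZ k x ∈ X)
  (hequiv : ∀ x ∈ X, π (shiftZ 1 x) = shiftZ 1 (π x))
  (hsurj : π '' X = Y)
  {m : ℕ} (hm : ∀ x x' : ℤ → A, (∀ j : ℤ, |j| ≤ (m : ℤ) → x j = x' j) → π x 0 = π x' 0)

include hXinv hequiv hsurj hm in
lemma dt_image {x : ℤ → A} (hx : x ∈ X) (hdt : DoublyTransitive X x) :
    π x ∈ Y ∧ DoublyTransitive Y (π x) := by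
  constructor
  · rw [← hsurj]; exact Set.mem_image_of_mem π hx
  intro w hw
  obtain ⟨y, hyY, i, hocc⟩ := hw
  obtain ⟨x₁, hx₁, hπx₁⟩ : ∃ x₁ ∈ X, π x₁ = y := by
    rw [← hsurj] at hyY; exact hyY
  set u : List A := List.ofFn (fun s : Fin (w.length + 2*m) => x₁ (i - m + (s.1 : ℤ))) with hu
  have hulen : u.length = w.length + 2*m := by simp [hu]
  have huL : InLanguage X u := ⟨x₁, hx₁, i - m, occursAt_ofFn x₁ (i - m) _⟩
  have key : ∀ j : ℤ, occursAt x u j → occursAt (π x) w (j + m) := by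
    intro j hocc_u
    intro l
    -- x agrees with x₂ := shiftZ (i - m - j) x₁ on [j, j + w.length + 2m - 1]
    set x₂ := shiftZ (i - m - j) x₁ with hx₂
    have hx₂X : x₂ ∈ X := hXinv _ _ hx₁
    have hagree : ∀ s : ℕ, s < w.length + 2*m → x (j + (s : ℤ)) = x₂ (j + (s : ℤ)) := by
      intro s hs
      have h1 := hocc_u ⟨s, by omega⟩
      have h2 : u.get ⟨s, by omega⟩ = x₁ (i - m + (s : ℤ)) := by
        simp [hu, List.get_ofFn]
      rw [h2] at h1
      rw [h1]
      simp [hx₂, shiftZ]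
      ring_nf
    have hlw : (l.1 : ℤ) ≤ (w.length : ℤ) - 1 := by
      have := l.2; omega
    have := localRule hXinv hequiv hm hx hx₂X (j + m + l.1)
      (by
        intro p hp
        obtain ⟨hpa, hpb⟩ := abs_le.mp hp
        have hp1 : j ≤ p := by omega
        have hp2 : p ≤ j + (w.length : ℤ) + 2*m - 1 := by omega
        have : p = j + ((p - j).toNat : ℤ) := by omega
        rw [this]
        exact hagree (p - j).toNat (by omega))
    rw [this]
    have heq : π x₂ = shiftZ (i - m - j) (π x₁) := equivZ hXinv hequiv _ _ hx₁
    rw [heq, hπx₁]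
    have : shiftZ (i - m - j) y (j + (m : ℤ) + (l.1 : ℤ)) = y (i + (l.1 : ℤ)) := by
      simp only [shiftZ]; ring_nf
    rw [this]
    have := hocc l
    convert this using 2
  constructor
  · intro N
    obtain ⟨j, hj1, hj2⟩ := (hdt u huL).1 (N - m)
    exact ⟨j + m, by omega, key j hj2⟩
  · intro N
    obtain ⟨j, hj1, hj2⟩ := (hdt u huL).2 (N - m)
    exact ⟨j + m, by omega, key j hj2⟩

end DTI

lemma dt_of_tail {C : Type*} {Y : Set (ℤ → C)} {y y' : ℤ → C} (N : ℤ)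
    (h : ∀ n : ℤ, N < |n| → y n = y' n) (hdt : DoublyTransitive Y y) :
    DoublyTransitive Y y' := by
  intro w hw
  obtain ⟨hr, hl⟩ := hdt w hw
  constructor
  · intro M
    obtain ⟨i, hi1, hi2⟩ := hr (max M (|N| + 1))
    refine ⟨i, le_trans (le_max_left _ _) hi1, fun j => ?_⟩
    rw [← h (i + (j.1 : ℤ)) ?_]
    · exact hi2 j
    · have h1 : |N| + 1 ≤ i := le_trans (le_max_right _ _) hi1
      have h2 : (0 : ℤ) ≤ (j.1 : ℤ) := by positivity
      have := abs_nonneg N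
      rw [abs_of_nonneg (by omega : (0:ℤ) ≤ i + (j.1 : ℤ))]
      have := le_abs_self N
      omega
  · intro M
    obtain ⟨i, hi1, hi2⟩ := hl (min M (-(|N| + 1) - (w.length : ℤ)))
    refine ⟨i, le_trans hi1 (min_le_left _ _), fun j => ?_⟩
    rw [← h (i + (j.1 : ℤ)) ?_]
    · exact hi2 j
    · have h1 : i ≤ -(|N| + 1) - (w.length : ℤ) := le_trans hi1 (min_le_right _ _)
      have h2 : (j.1 : ℤ) ≤ (w.length : ℤ) - 1 := by
        have := j.2; omega
      have h3 : (0 : ℤ) ≤ (j.1 : ℤ) := by positivity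
      have := abs_nonneg N
      rw [abs_of_nonpos (by omega : i + (j.1 : ℤ) ≤ 0)]
      have := le_abs_self N
      omega

section Magic
variable {X : Set (ℤ → A)} {π : (ℤ → A) → (ℤ → B)}

lemma magic (hXcl : IsClosed X) (hcont : Continuous π) {xs : ℤ → A} (hxs : xs ∈ X)
    (huniq : ∀ x ∈ X, π x = π xs → x = xs) (r : ℕ) :
    ∃ L : ℕ, ∀ x ∈ X, (∀ j : ℤ, |j| ≤ (L : ℤ) → π x j = π xs j) →
      ∀ j : ℤ, |j| ≤ (r : ℤ) → x j = xs j := by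
  by_contra hc
  push_neg at hc
  set K : ℕ → Set (ℤ → A) := fun L =>
    {x | x ∈ X ∧ (∀ j : ℤ, |j| ≤ (L : ℤ) → π x j = π xs j) ∧
      ∃ j ∈ Finset.Icc (-(r : ℤ)) (r : ℤ), x j ≠ xs j} with hK
  have hclosed : ∀ L, IsClosed (K L) := by
    intro L
    have hKL : K L = X ∩ ((⋂ (j : ℤ), ⋂ (_ : |j| ≤ (L : ℤ)), {x | π x j = π xs j}) ∩
        (⋃ j ∈ Finset.Icc (-(r : ℤ)) (r : ℤ), {x : ℤ → A | x j ≠ xs j})) := by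
      ext x
      simp only [hK, Set.mem_setOf_eq, Set.mem_inter_iff, Set.mem_iInter, Set.mem_iUnion]
      tauto
    rw [hKL]
    apply hXcl.inter
    apply IsClosed.inter
    · exact isClosed_iInter fun j => isClosed_iInter fun _ =>
        isClosed_eq ((continuous_apply j).comp hcont) continuous_const
    · apply Set.Finite.isClosed_biUnion (Finset.finite_toSet _)
      intro j _
      have : {x : ℤ → A | x j ≠ xs j} = (fun x : ℤ → A => x j) ⁻¹' {xs j}ᶜ := rfl
      rw [this]
      exact (isClosed_discrete _).preimage (continuous_apply j)
  have hne : ∀ L, (K L).Nonempty := by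
    intro L
    obtain ⟨x, hx1, hx2, j, hj1, hj2⟩ := hc L
    refine ⟨x, hx1, hx2, j, ?_, hj2⟩
    rw [Finset.mem_Icc]
    obtain ⟨h1, h2⟩ := abs_le.mp hj1
    exact ⟨h1, h2⟩
  have hanti : ∀ L : ℕ, K (L + 1) ⊆ K L := by
    intro L x hx
    exact ⟨hx.1, fun j hj => hx.2.1 j (le_trans hj (by push_cast; omega)), hx.2.2⟩
  obtain ⟨xb, hxb⟩ := IsCompact.nonempty_iInter_of_sequence_nonempty_isCompact_isClosed
    K hanti hne ((hclosed 0).isCompact) hclosed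
  simp only [Set.mem_iInter] at hxb
  have hxbX : xb ∈ X := (hxb 0).1
  have hπ : π xb = π xs := by
    funext j
    exact (hxb j.natAbs).2.1 j (le_of_eq (Int.abs_eq_natAbs j))
  have := huniq xb hxbX hπ
  obtain ⟨j, _, hj2⟩ := (hxb 0).2.2
  exact hj2 (by rw [this])

end Magic

lemma occursAt_window {C : Type*} {x xs : ℤ → C} {L : ℕ} {i₀ : ℤ}
    (hocc : occursAt x (List.ofFn fun s : Fin (2*L+1) => xs (-(L:ℤ) + (s.1 : ℤ))) i₀) :
    ∀ j : ℤ, |j| ≤ (L:ℤ) → x (i₀ + (L:ℤ) + j) = xs j := by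
  intro j hj
  obtain ⟨hj1, hj2⟩ := abs_le.mp hj
  set t := (j + L).toNat with htdef
  have htZ : (t : ℤ) = j + L := Int.toNat_of_nonneg (by omega)
  have ht : t < 2*L+1 := by omega
  have hlen : (List.ofFn fun s : Fin (2*L+1) => xs (-(L:ℤ) + (s.1 : ℤ))).length = 2*L+1 := by
    simp
  have h := hocc ⟨t, by omega⟩
  rw [List.get_ofFn] at h
  simp only [Fin.coe_cast] at h
  have h1 : i₀ + (t : ℤ) = i₀ + (L:ℤ) + j := by omega
  have h2 : -(L:ℤ) + (t : ℤ) = j := by omega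
  rw [h1, h2] at h
  exact h

section Glue
variable {X : Set (ℤ → A)} {Y : Set (ℤ → B)} {π : (ℤ → A) → (ℤ → B)}
  {n : ℕ} {F : Finset (List A)}
  (hXdesc : X = {x : ℤ → A | ∀ i : ℤ, (List.ofFn fun j : Fin n => x (i + (j.1 : ℤ))) ∉ F})
  (hXinv : ∀ k : ℤ, ∀ x ∈ X, shiftZ k x ∈ X)
  (hequiv : ∀ x ∈ X, π (shiftZ 1 x) = shiftZ 1 (π x))
  {m : ℕ} (hm : ∀ x x' : ℤ → A, (∀ j : ℤ, |j| ≤ (m : ℤ) → x j = x' j) → π x 0 = π x' 0)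
  (huniq : ∀ x₁ x₂ : ℤ → A, x₁ ∈ X → x₂ ∈ X → DoublyTransitive Y (π x₂) →
    π x₁ = π x₂ → x₁ = x₂)
  {xs : ℤ → A} (hxs : xs ∈ X) (hxsY : π xs ∈ Y)
  {r L : ℕ} (hrn : n ≤ r) (hrm : 2*m + 1 ≤ r) (hLm : m ≤ L)
  (hmagic : ∀ x ∈ X, (∀ j : ℤ, |j| ≤ (L : ℤ) → π x j = π xs j) →
      ∀ j : ℤ, |j| ≤ (r : ℤ) → x j = xs j)

include hXdesc hXinv hequiv hm huniq hxs hxsY hrn hrm hLm hmagic in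
lemma tail_lift {x x' : ℤ → A} (hx : x ∈ X) (hx' : x' ∈ X)
    (hdty : DoublyTransitive Y (π x)) (hdty' : DoublyTransitive Y (π x'))
    {N : ℤ} (hN : 0 ≤ N) (htail : ∀ k : ℤ, N < |k| → π x k = π x' k) :
    ∃ N' : ℤ, ∀ k : ℤ, N' < |k| → x k = x' k := by
  set y := π x with hy
  set y' := π x' with hy'
  set ys := π xs with hys
  -- the magic word
  set w : List B := List.ofFn (fun s : Fin (2*L+1) => ys (-(L:ℤ) + (s.1 : ℤ))) with hw
  have hwL : InLanguage Y w := by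
    refine ⟨ys, hxsY, -(L:ℤ), ?_⟩
    have := occursAt_ofFn (A := B) ys (-(L:ℤ)) (2*L+1)
    exact this
  -- sync lemma: given a center where both x and x' see the magic word of y_s,
  -- they both copy x_s on a block of radius r around the center
  have sync : ∀ (x₀ : ℤ → A), x₀ ∈ X → ∀ c : ℤ,
      (∀ j : ℤ, |j| ≤ (L:ℤ) → π x₀ (c + j) = ys j) →
      ∀ j : ℤ, |j| ≤ (r:ℤ) → x₀ (c + j) = xs j := by
    intro x₀ hx₀ c hc j hj
    have hsx : shiftZ c x₀ ∈ X := hXinv _ _ hx₀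
    have hπ : π (shiftZ c x₀) = shiftZ c (π x₀) := equivZ hXinv hequiv _ _ hx₀
    have := hmagic (shiftZ c x₀) hsx (by
      intro j' hj'
      rw [hπ]
      simp only [shiftZ]
      rw [add_comm j' c]
      exact hc j' hj') j hj
    simp only [shiftZ] at this
    rw [add_comm c j]
    exact this
  -- membership criterion for glued points
  have memX : ∀ (z : ℤ → A), (∀ i : ℤ, (∀ j : ℕ, j < n → z (i + (j:ℤ)) = x (i + (j:ℤ))) ∨
      (∀ j : ℕ, j < n → z (i + (j:ℤ)) = x' (i + (j:ℤ)))) → z ∈ X := by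
    intro z hz
    rw [hXdesc]
    intro i
    rcases hz i with h | h
    · have : (List.ofFn fun j : Fin n => z (i + (j.1 : ℤ)))
          = (List.ofFn fun j : Fin n => x (i + (j.1 : ℤ))) := by
        congr 1; funext j; exact h j.1 j.2
      rw [this]
      rw [hXdesc] at hx
      exact hx i
    · have : (List.ofFn fun j : Fin n => z (i + (j.1 : ℤ)))
          = (List.ofFn fun j : Fin n => x' (i + (j.1 : ℤ))) := by
        congr 1; funext j; exact h j.1 j.2
      rw [this]
      rw [hXdesc] at hx'
      exact hx' i
  -- RIGHT gluing
  have right : ∀ k : ℤ, ∀ c : ℤ, N + (m:ℤ) + 1 ≤ c →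
      (∀ j : ℤ, |j| ≤ (r:ℤ) → x (c + j) = xs j) →
      (∀ j : ℤ, |j| ≤ (r:ℤ) → x' (c + j) = xs j) → c ≤ k → x k = x' k := by
    intro k c hcN hsx hsx' hck
    have hagree : ∀ p : ℤ, c - r ≤ p → p ≤ c + r → x p = x' p := by
      intro p h1 h2
      have e1 := hsx (p - c) (by rw [abs_le]; omega)
      have e2 := hsx' (p - c) (by rw [abs_le]; omega)
      rw [add_sub_cancel] at e1 e2
      rw [e1, e2]
    set z : ℤ → A := fun p => if p < c then x' p else x p with hz
    have hzx : ∀ p : ℤ, c - r ≤ p → z p = x p := by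
      intro p hp
      by_cases h : p < c
      · simp only [hz, if_pos h]
        exact (hagree p hp (by omega)).symm
      · simp only [hz, if_neg h]
    have hzX : z ∈ X := by
      apply memX
      intro i
      by_cases h1 : i + (n:ℤ) ≤ c
      · right
        intro j hj
        simp only [hz]
        rw [if_pos (by omega : i + (j:ℤ) < c)]
      · left
        intro j hj
        exact hzx (i + (j:ℤ)) (by omega)
    have hπz : π z = y' := by
      funext k'
      by_cases h1 : k' ≤ c - m - 1
      · have : π z k' = π x' k' := by
          apply localRule hXinv hequiv hm hzX hx' k'
          intro p hp
          obtain ⟨hp1, hp2⟩ := abs_le.mp hp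
          simp only [hz]
          rw [if_pos (by omega : p < c)]
        rw [this]
      · have h2 : π z k' = π x k' := by
          apply localRule hXinv hequiv hm hzX hx k'
          intro p hp
          obtain ⟨hp1, hp2⟩ := abs_le.mp hp
          exact hzx p (by omega)
        rw [h2, ← hy]
        show y k' = y' k'
        apply htail
        rw [abs_of_nonneg (by omega : (0:ℤ) ≤ k')]
        omega
    have hzx' : z = x' := huniq z x' hzX hx' hdty' hπz
    have : z k = x k := hzx k (by omega)
    rw [← this, hzx']
  -- LEFT gluing
  have left : ∀ k : ℤ, ∀ c : ℤ, c ≤ -(N + (m:ℤ) + (L:ℤ) + 1) →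
      (∀ j : ℤ, |j| ≤ (r:ℤ) → x (c + j) = xs j) →
      (∀ j : ℤ, |j| ≤ (r:ℤ) → x' (c + j) = xs j) → k < c → x k = x' k := by
    intro k c hcN hsx hsx' hck
    have hagree : ∀ p : ℤ, c - r ≤ p → p ≤ c + r → x p = x' p := by
      intro p h1 h2
      have e1 := hsx (p - c) (by rw [abs_le]; omega)
      have e2 := hsx' (p - c) (by rw [abs_le]; omega)
      rw [add_sub_cancel] at e1 e2
      rw [e1, e2]
    set z : ℤ → A := fun p => if p < c then x p else x' p with hz
    have hzx' : ∀ p : ℤ, c - r ≤ p → z p = x' p := by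
      intro p hp
      by_cases h : p < c
      · simp only [hz, if_pos h]
        exact hagree p hp (by omega)
      · simp only [hz, if_neg h]
    have hzX : z ∈ X := by
      apply memX
      intro i
      by_cases h1 : i + (n:ℤ) ≤ c
      · left
        intro j hj
        simp only [hz]
        rw [if_pos (by omega : i + (j:ℤ) < c)]
      · right
        intro j hj
        exact hzx' (i + (j:ℤ)) (by omega)
    have hπz : π z = y' := by
      funext k'
      by_cases h1 : k' ≤ c - m - 1
      · have : π z k' = π x k' := by
          apply localRule hXinv hequiv hm hzX hx k'
          intro p hp
          obtain ⟨hp1, hp2⟩ := abs_le.mp hp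
          simp only [hz]
          rw [if_pos (by omega : p < c)]
        rw [this, ← hy]
        show y k' = y' k'
        apply htail
        rw [abs_of_nonpos (by omega : k' ≤ 0)]
        omega
      · have h2 : π z k' = π x' k' := by
          apply localRule hXinv hequiv hm hzX hx' k'
          intro p hp
          obtain ⟨hp1, hp2⟩ := abs_le.mp hp
          exact hzx' p (by omega)
        rw [h2]
    have hzeq : z = x' := huniq z x' hzX hx' hdty' hπz
    have : z k = x k := by simp only [hz, if_pos hck]
    rw [← this, hzeq]
  -- find the centers
  obtain ⟨i₀, hi₀1, hi₀2⟩ := (hdty w hwL).1 (N + m + 1)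
  obtain ⟨i₁, hi₁1, hi₁2⟩ := (hdty w hwL).2 (-(N + m + 1) - 2*(L:ℤ) - 1)
  set c₀ := i₀ + (L:ℤ) with hc₀
  set c₁ := i₁ + (L:ℤ) with hc₁
  have hmy₀ : ∀ j : ℤ, |j| ≤ (L:ℤ) → y (c₀ + j) = ys j := occursAt_window hi₀2
  have hmy₁ : ∀ j : ℤ, |j| ≤ (L:ℤ) → y (c₁ + j) = ys j := occursAt_window hi₁2
  have hmy₀' : ∀ j : ℤ, |j| ≤ (L:ℤ) → y' (c₀ + j) = ys j := by
    intro j hj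
    obtain ⟨h1, h2⟩ := abs_le.mp hj
    rw [← hmy₀ j hj]
    refine (htail (c₀ + j) ?_).symm
    rw [abs_of_nonneg (by omega : (0:ℤ) ≤ c₀ + j)]
    omega
  have hmy₁' : ∀ j : ℤ, |j| ≤ (L:ℤ) → y' (c₁ + j) = ys j := by
    intro j hj
    obtain ⟨h1, h2⟩ := abs_le.mp hj
    rw [← hmy₁ j hj]
    refine (htail (c₁ + j) ?_).symm
    rw [abs_of_nonpos (by omega : c₁ + j ≤ 0)]
    omega
  have hs₀ := sync x hx c₀ hmy₀
  have hs₀' := sync x' hx' c₀ hmy₀'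
  have hs₁ := sync x hx c₁ hmy₁
  have hs₁' := sync x' hx' c₁ hmy₁'
  refine ⟨|c₀| + |c₁| + 1, fun k hk => ?_⟩
  rcases le_or_gt c₀ k with h | h
  · exact right k c₀ (by omega) hs₀ hs₀' h
  · apply left k c₁ (by omega) hs₁ hs₁'
    have h1 := le_abs_self c₀
    have h2 := le_abs_self c₁
    have h3 := neg_abs_le c₀
    have h4 := neg_abs_le c₁
    have h5 := abs_nonneg c₀
    have h6 := abs_nonneg c₁
    rcases abs_cases k with ⟨hk1, hk2⟩ | ⟨hk1, hk2⟩ <;> omega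

end Glue
end SB

section ErgFull
open Filter

lemma full_of_invariant {P : Type*} [MeasurableSpace P] {σ : P → P} {μ : Measure P}
    [IsProbabilityMeasure μ] (herg : Ergodic σ μ) (G : ℕ → Set P)
    (hmeas : ∀ N, MeasurableSet (G N)) (hanti : ∀ N, G (N+1) ⊆ G N)
    (hconst : ∀ N, μ (G (N+1)) = μ (G N))
    (hinv : σ ⁻¹' (⋂ N, G N) = ⋂ N, G N) (hpos : 0 < μ (G 0)) :
    μ (⋂ N, G N) = 1 := by
  have hc : ∀ N, μ (G N) = μ (G 0) := by
    intro N
    induction N with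
    | zero => rfl
    | succ N ih => rw [hconst N, ih]
  have hW : μ (⋂ N, G N) = μ (G 0) := by
    have ht := tendsto_measure_iInter_atTop (μ := μ) (s := G)
      (fun N => (hmeas N).nullMeasurableSet)
      (antitone_nat_of_succ_le fun N => hanti N)
      ⟨0, measure_ne_top μ _⟩
    have ht2 : Tendsto (μ ∘ G) atTop (nhds (μ (G 0))) := by
      have : (μ ∘ G) = fun _ => μ (G 0) := funext fun N => hc N
      rw [this]
      exact tendsto_const_nhds
    exact tendsto_nhds_unique ht ht2
  have hmW : MeasurableSet (⋂ N, G N) := MeasurableSet.iInter fun N => hmeas N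
  rcases herg.ae_empty_or_univ hmW hinv with h | h
  · exfalso
    have : μ (⋂ N, G N) = 0 := by
      rw [measure_congr h]; simp
    rw [hW] at this
    exact absurd this (ne_of_gt hpos)
  · rw [measure_congr h]
    simp

variable {A : Type*} [Fintype A] [TopologicalSpace A] [DiscreteTopology A]
    [MeasurableSpace A] [BorelSpace A]

lemma measurableSet_occurs (w : List A) (i : ℤ) : MeasurableSet {x : ℤ → A | occursAt x w i} := by
  have : {x : ℤ → A | occursAt x w i} = ⋂ j : Fin w.length,
      (fun x : ℤ → A => x (i + (j.1 : ℤ))) ⁻¹' {w.get j} := by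
    ext x; simp [occursAt, Set.mem_iInter]
  rw [this]
  exact MeasurableSet.iInter fun j => (measurable_pi_apply _) (MeasurableSet.singleton _)

lemma isOpen_occurs (w : List A) (i : ℤ) : IsOpen {x : ℤ → A | occursAt x w i} := by
  have : {x : ℤ → A | occursAt x w i} = ⋂ j : Fin w.length,
      (fun x : ℤ → A => x (i + (j.1 : ℤ))) ⁻¹' {w.get j} := by
    ext x; simp [occursAt, Set.mem_iInter]
  rw [this]
  exact isOpen_iInter_of_finite fun j => (isOpen_discrete _).preimage (continuous_apply _)

lemma preimage_occurs (w : List A) (i : ℤ) :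
    (shiftZ 1) ⁻¹' {x : ℤ → A | occursAt x w i} = {x : ℤ → A | occursAt x w (i+1)} := by
  ext x
  simp only [Set.mem_preimage, Set.mem_setOf_eq]
  constructor <;> intro h j <;> have := h j <;>
    simpa [shiftZ, add_assoc, add_comm, add_left_comm] using this

def cylSet {A : Type*} (w : List A) (i : ℤ) : Set (ℤ → A) := {x | occursAt x w i}
def grSet {A : Type*} (w : List A) (N : ℕ) : Set (ℤ → A) := ⋃ (i : ℤ), ⋃ (_ : (N:ℤ) ≤ i), cylSet w i
def glSet {A : Type*} (w : List A) (N : ℕ) : Set (ℤ → A) := ⋃ (i : ℤ), ⋃ (_ : i ≤ -(N:ℤ)), cylSet w i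

lemma grSet_anti {A : Type*} (w : List A) (N : ℕ) : grSet w (N+1) ⊆ grSet w N := by
  intro x hx
  simp only [grSet, Set.mem_iUnion] at hx ⊢
  obtain ⟨i, hi, hx⟩ := hx
  exact ⟨i, by push_cast at hi ⊢; omega, hx⟩

lemma glSet_anti {A : Type*} (w : List A) (N : ℕ) : glSet w (N+1) ⊆ glSet w N := by
  intro x hx
  simp only [glSet, Set.mem_iUnion] at hx ⊢
  obtain ⟨i, hi, hx⟩ := hx
  exact ⟨i, by push_cast at hi ⊢; omega, hx⟩

lemma exists_dt_set {X : Set (ℤ → A)} (hX : IsShiftSpace X)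
    {μ : Measure (ℤ → A)} (hμprob : IsProbabilityMeasure μ) (hμconc : μ X = 1)
    (hμerg : Ergodic (shiftZ 1) μ) (hμsupp : FullSupportOn μ X) :
    ∃ D : Set (ℤ → A), MeasurableSet D ∧ D ⊆ X ∧ (∀ x ∈ D, DoublyTransitive X x) ∧ μ D = 1 := by
  classical
  have hCmeas : ∀ (w : List A) (i : ℤ), MeasurableSet (cylSet w i) :=
    fun w i => measurableSet_occurs w i
  have hCpos : ∀ w : List A, InLanguage X w → 0 < μ (cylSet w 0) := by
    intro w hw
    apply hμsupp _ (isOpen_occurs w 0)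
    obtain ⟨x₀, hx₀, i, hi⟩ := hw
    refine ⟨shiftZ i x₀, ?_, hX.2 i x₀ hx₀⟩
    show occursAt (shiftZ i x₀) w 0
    intro j
    have := hi j
    simpa [shiftZ, add_assoc, add_comm, add_left_comm] using this
  have hGRmeas : ∀ (w : List A) (N : ℕ), MeasurableSet (grSet (A := A) w N) :=
    fun w N => MeasurableSet.iUnion fun i => MeasurableSet.iUnion fun _ => hCmeas w i
  have hGLmeas : ∀ (w : List A) (N : ℕ), MeasurableSet (glSet (A := A) w N) :=
    fun w N => MeasurableSet.iUnion fun i => MeasurableSet.iUnion fun _ => hCmeas w i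
  have hCpre : ∀ (w : List A) (i : ℤ), (shiftZ 1) ⁻¹' (cylSet w i) = cylSet w (i+1) :=
    fun w i => preimage_occurs w i
  have hpreR : ∀ (w : List A) (N : ℕ), (shiftZ 1) ⁻¹' (grSet w N) = grSet w (N+1) := by
    intro w N
    simp only [grSet, Set.preimage_iUnion, hCpre]
    ext x
    simp only [Set.mem_iUnion]
    constructor
    · rintro ⟨i, hi, hx⟩
      exact ⟨i + 1, by push_cast at hi ⊢; omega, hx⟩
    · rintro ⟨i, hi, hx⟩
      refine ⟨i - 1, by push_cast at hi ⊢; omega, ?_⟩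
      simpa using hx
  have hpreL : ∀ (w : List A) (N : ℕ), (shiftZ 1) ⁻¹' (glSet w (N+1)) = glSet w N := by
    intro w N
    simp only [glSet, Set.preimage_iUnion, hCpre]
    ext x
    simp only [Set.mem_iUnion]
    constructor
    · rintro ⟨i, hi, hx⟩
      exact ⟨i + 1, by push_cast at hi ⊢; omega, hx⟩
    · rintro ⟨i, hi, hx⟩
      refine ⟨i - 1, by push_cast at hi ⊢; omega, ?_⟩
      simpa using hx
  have hmp := hμerg.toMeasurePreserving
  have hmuR : ∀ w : List A, InLanguage X w → μ (⋂ N, grSet w N) = 1 := by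
    intro w hw
    apply full_of_invariant hμerg _ (hGRmeas w) (grSet_anti w)
    · intro N
      have := hmp.measure_preimage (hGRmeas w N).nullMeasurableSet
      rw [hpreR w N] at this
      exact this
    · rw [Set.preimage_iInter]
      apply Set.Subset.antisymm
      · intro x hx
        simp only [Set.mem_iInter] at hx ⊢
        intro N
        have := hx N
        rw [hpreR w N] at this
        exact grSet_anti w N this
      · intro x hx
        simp only [Set.mem_iInter] at hx ⊢
        intro N
        rw [hpreR w N]
        exact hx (N+1)
    · refine lt_of_lt_of_le (hCpos w hw) (measure_mono ?_)
      intro x hx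
      simp only [grSet, Set.mem_iUnion]
      exact ⟨0, by norm_num, hx⟩
  have hmuL : ∀ w : List A, InLanguage X w → μ (⋂ N, glSet w N) = 1 := by
    intro w hw
    apply full_of_invariant hμerg _ (hGLmeas w) (glSet_anti w)
    · intro N
      have := hmp.measure_preimage (hGLmeas w (N+1)).nullMeasurableSet
      rw [hpreL w N] at this
      exact this.symm
    · rw [Set.preimage_iInter]
      apply Set.Subset.antisymm
      · intro x hx
        simp only [Set.mem_iInter] at hx ⊢
        intro N
        have := hx (N+1)
        rw [hpreL w N] at this
        exact this
      · intro x hx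
        simp only [Set.mem_iInter] at hx ⊢
        intro N
        rcases N with _ | N
        · have h1 : x ∈ glSet w 0 := hx 0
          rw [← hpreL w 0] at h1
          exact Set.preimage_mono (glSet_anti w 0) h1
        · rw [hpreL w N]
          exact hx N
    · refine lt_of_lt_of_le (hCpos w hw) (measure_mono ?_)
      intro x hx
      simp only [glSet, Set.mem_iUnion]
      exact ⟨0, by norm_num, hx⟩
  set D : Set (ℤ → A) := X ∩ ⋂ (w : List A), ⋂ (_ : InLanguage X w),
    ((⋂ N, grSet w N) ∩ (⋂ N, glSet w N)) with hD
  have hDmeas : MeasurableSet D := by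
    apply (hX.1.measurableSet).inter
    exact MeasurableSet.iInter fun w => MeasurableSet.iInter fun _ =>
      ((MeasurableSet.iInter fun N => hGRmeas w N).inter
        (MeasurableSet.iInter fun N => hGLmeas w N))
  refine ⟨D, hDmeas, Set.inter_subset_left, ?_, ?_⟩
  · intro x hx w hw
    have hx2 := hx.2
    simp only [Set.mem_iInter] at hx2
    obtain ⟨hxR, hxL⟩ := hx2 w hw
    simp only [Set.mem_iInter] at hxR hxL
    constructor
    · intro N
      have := hxR N.toNat
      simp only [grSet, Set.mem_iUnion] at this
      obtain ⟨i, hi, hxi⟩ := this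
      refine ⟨i, ?_, hxi⟩
      have := Int.self_le_toNat N
      omega
    · intro N
      have := hxL (-N).toNat
      simp only [glSet, Set.mem_iUnion] at this
      obtain ⟨i, hi, hxi⟩ := this
      refine ⟨i, ?_, hxi⟩
      have := Int.self_le_toNat (-N)
      omega
  · have hcompl : μ Dᶜ = 0 := by
      rw [hD, Set.compl_inter]
      apply measure_union_null
      · have : μ X = 1 := hμconc
        have := prob_compl_eq_zero_iff (μ := μ) hX.1.measurableSet
        exact this.mpr hμconc
      · rw [Set.compl_iInter]
        apply measure_iUnion_null
        intro w
        rw [Set.compl_iInter]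
        apply measure_iUnion_null
        intro hw
        rw [Set.compl_inter]
        apply measure_union_null
        · rw [prob_compl_eq_zero_iff (MeasurableSet.iInter fun N => hGRmeas w N)]
          exact hmuR w hw
        · rw [prob_compl_eq_zero_iff (MeasurableSet.iInter fun N => hGLmeas w N)]
          exact hmuL w hw
    have := prob_compl_eq_zero_iff (μ := μ) hDmeas
    exact this.mp hcompl

end ErgFull


/-- preservation of Gibbsianness under almost invertible factor codes:
let `π` be an almost invertible factor code from an irreducible SFT `X` onto a sofic
shift `Y`, and let `μ` be fully supported, shift-invariant, ergodic, and nonsingular for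
the Gibbs relation of `X`. Then `ν = π_* μ` is nonsingular for the Gibbs relation of `Y`;
moreover if `μ` is Gibbs for an additive cocycle `φ`, then `ν` is Gibbs for the cocycle
`φ ∘ (π⁻¹ × π⁻¹)`, i.e. for some cocycle `φ'` agreeing with `φ` through `π⁻¹` on the
(full-measure set of) doubly transitive points. -/
theorem stmt18 {A B : Type*} [Fintype A] [TopologicalSpace A] [DiscreteTopology A]
    [MeasurableSpace A] [BorelSpace A]
    [Fintype B] [TopologicalSpace B] [DiscreteTopology B]
    [MeasurableSpace B] [BorelSpace B]
    (X : Set (ℤ → A)) (hX : IsShiftSpace X) (hSFT : IsSFT X) (hXirr : IrreducibleShift X)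
    (Y : Set (ℤ → B)) (hY : IsShiftSpace Y)
    (π : (ℤ → A) → (ℤ → B)) (hcont : Continuous π)
    (hequiv : ∀ x ∈ X, π (shiftZ 1 x) = shiftZ 1 (π x))
    (hsurj : π '' X = Y)
    (hai : ∀ y ∈ Y, DoublyTransitive Y y → ∃! x, x ∈ X ∧ π x = y)
    (μ : Measure (ℤ → A)) (hμprob : IsProbabilityMeasure μ) (hμconc : μ X = 1)
    (hμerg : Ergodic (shiftZ 1) μ) (hμsupp : FullSupportOn μ X)
    (hμns : NonsingularFor μ (GibbsRel X)) :
    NonsingularFor (μ.map π) (GibbsRel Y) ∧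
    ∀ φ : (ℤ → A) → (ℤ → A) → ℝ,
      (∀ x y z : ℤ → A, GibbsRel X x y → GibbsRel X y z → φ x y + φ y z = φ x z) →
      IsGibbsMeasure μ (GibbsRel X) φ →
      ∃ φ' : (ℤ → B) → (ℤ → B) → ℝ,
        (∀ x x' : ℤ → A, x ∈ X → x' ∈ X → DoublyTransitive X x → DoublyTransitive X x' →
          GibbsRel X x x' → φ' (π x) (π x') = φ x x') ∧
        IsGibbsMeasure (μ.map π) (GibbsRel Y) φ' := by
  classical
  haveI : PolishSpace A := inferInstance
  obtain ⟨n, F, hXdesc⟩ := hSFT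
  obtain ⟨m, hm⟩ := exists_window π hcont
  have hπmeas : Measurable π := hcont.measurable
  have hXmeas : MeasurableSet X := hX.1.measurableSet
  haveI hνprob : IsProbabilityMeasure (μ.map π) :=
    Measure.isProbabilityMeasure_map hπmeas.aemeasurable
  obtain ⟨D, hDmeas, hDX, hDdt, hDfull⟩ := exists_dt_set hX hμprob hμconc hμerg hμsupp
  have hμDc : μ Dᶜ = 0 := by
    rw [Set.compl_eq_univ_diff, measure_diff (Set.subset_univ D) hDmeas.nullMeasurableSet
      (measure_ne_top μ D), measure_univ, hDfull, tsub_self]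
  have inter_full : ∀ T : Set (ℤ → A), μ T = μ (T ∩ D) := by
    intro T
    refine le_antisymm ?_ (measure_mono Set.inter_subset_left)
    calc μ T ≤ μ ((T ∩ D) ∪ Dᶜ) := measure_mono (fun z hz => by
          by_cases h : z ∈ D
          · exact Or.inl ⟨hz, h⟩
          · exact Or.inr h)
    _ ≤ μ (T ∩ D) + μ Dᶜ := measure_union_le _ _
    _ = μ (T ∩ D) := by rw [hμDc, add_zero]
  have hinj2 : ∀ x₁ x₂ : ℤ → A, x₁ ∈ X → x₂ ∈ X → DoublyTransitive Y (π x₂) →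
      π x₁ = π x₂ → x₁ = x₂ := by
    intro x₁ x₂ hx₁ hx₂ hdt heq
    have hy : π x₂ ∈ Y := by rw [← hsurj]; exact Set.mem_image_of_mem π hx₂
    obtain ⟨x₀, _, huniq⟩ := hai (π x₂) hy hdt
    rw [huniq x₁ ⟨hx₁, heq⟩, huniq x₂ ⟨hx₂, rfl⟩]
  have hdtim : ∀ x ∈ X, DoublyTransitive X x → π x ∈ Y ∧ DoublyTransitive Y (π x) :=
    fun x hx hdt => dt_image hX.2 hequiv hsurj hm hx hdt
  have hinjD : Set.InjOn π D := by
    intro x₁ hx₁ x₂ hx₂ heq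
    exact hinj2 x₁ x₂ (hDX hx₁) (hDX hx₂) (hdtim x₂ (hDX hx₂) (hDdt x₂ hx₂)).2 heq
  obtain ⟨xstar, hxstarD⟩ : D.Nonempty := by
    rw [Set.nonempty_iff_ne_empty]
    intro h
    rw [h] at hDfull
    simp at hDfull
  have hxstarX : xstar ∈ X := hDX hxstarD
  have hxstarYdt : π xstar ∈ Y ∧ DoublyTransitive Y (π xstar) :=
    hdtim xstar hxstarX (hDdt xstar hxstarD)
  obtain ⟨L₀, hL₀⟩ := magic hX.1 hcont hxstarX
    (fun x hx hpx => hinj2 x xstar hx hxstarX hxstarYdt.2 hpx) (n + 2*m + 1)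
  set L := max L₀ m with hL
  have hmagic : ∀ x ∈ X, (∀ j : ℤ, |j| ≤ (L : ℤ) → π x j = π xstar j) →
      ∀ j : ℤ, |j| ≤ ((n + 2*m + 1 : ℕ) : ℤ) → x j = xstar j := by
    intro x hx hmatch
    exact hL₀ x hx (fun j hj => hmatch j (le_trans hj (by exact_mod_cast le_max_left L₀ m)))
  have mytail : ∀ x x' : ℤ → A, x ∈ X → x' ∈ X → DoublyTransitive Y (π x) →
      DoublyTransitive Y (π x') → (∃ N : ℤ, ∀ k : ℤ, N < |k| → π x k = π x' k) →
      GibbsRel X x x' := by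
    intro x x' hx hx' hdt hdt' ⟨N₀, hN₀⟩
    obtain ⟨N', hN'⟩ := tail_lift hXdesc hX.2 hequiv hm hinj2 hxstarX hxstarYdt.1
      (by omega) (by omega) (le_max_right L₀ m) hmagic hx hx'
      hdt hdt' (abs_nonneg N₀) (fun k hk => hN₀ k (lt_of_le_of_lt (le_abs_self N₀) hk))
    exact ⟨hx, hx', N', hN'⟩
  set G : Set (ℤ → B) := π '' D with hG
  have hGmeas : MeasurableSet G :=
    hDmeas.image_of_continuousOn_injOn hcont.continuousOn hinjD
  have hνG : μ.map π G = 1 := by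
    rw [Measure.map_apply hπmeas hGmeas]
    refine le_antisymm prob_le_one ?_
    rw [← hDfull]
    exact measure_mono (Set.subset_preimage_image π D)
  have hνGc : μ.map π Gᶜ = 0 := by
    rw [prob_compl_eq_zero_iff hGmeas]
    exact hνG
  -- image of a measurable subset of D is measurable and has the same measure
  have himgD : ∀ E : Set (ℤ → A), E ⊆ D → MeasurableSet E →
      MeasurableSet (π '' E) ∧ μ.map π (π '' E) = μ E := by
    intro E hED hEmeas
    have h1 : MeasurableSet (π '' E) :=
      hEmeas.image_of_continuousOn_injOn hcont.continuousOn (hinjD.mono hED)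
    refine ⟨h1, ?_⟩
    rw [Measure.map_apply hπmeas h1, inter_full (π ⁻¹' (π '' E))]
    congr 1
    apply Set.Subset.antisymm
    · rintro z ⟨hz1, hz2⟩
      obtain ⟨e, heE, hee⟩ := hz1
      rwa [← hinjD (hED heE) hz2 hee]
    · intro e heE
      exact ⟨Set.subset_preimage_image π E heE, hED heE⟩
  -- Part 1: nonsingularity
  have hns : NonsingularFor (μ.map π) (GibbsRel Y) := by
    intro S hSmeas hSnull
    have hpre_null : μ (π ⁻¹' S ∩ X) = 0 := by
      refine le_antisymm ?_ zero_le
      calc μ (π ⁻¹' S ∩ X) ≤ μ (π ⁻¹' S) := measure_mono Set.inter_subset_left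
      _ = μ.map π S := (Measure.map_apply hπmeas hSmeas).symm
      _ = 0 := hSnull
    have hsatX : μ {x | ∃ a ∈ π ⁻¹' S ∩ X, GibbsRel X a x} = 0 :=
      hμns _ ((hπmeas hSmeas).inter hXmeas) hpre_null
    set N' := toMeasurable μ {x | ∃ a ∈ π ⁻¹' S ∩ X, GibbsRel X a x} with hN'
    have hN'meas : MeasurableSet N' := measurableSet_toMeasurable _ _
    have hN'null : μ N' = 0 := by rw [hN', measure_toMeasurable]; exact hsatX
    have hkey : {y | ∃ s ∈ S, GibbsRel Y s y} ⊆ Gᶜ ∪ π '' (D ∩ N') := by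
      rintro y ⟨s, hsS, hsY, hyY, N₀, htail⟩
      by_cases hyG : y ∈ G
      · right
        obtain ⟨x, hxD, rfl⟩ := hyG
        have hdty : DoublyTransitive Y (π x) := (hdtim x (hDX hxD) (hDdt x hxD)).2
        have hdts : DoublyTransitive Y s :=
          dt_of_tail N₀ (fun k hk => (htail k hk).symm) hdty
        obtain ⟨xs, ⟨hxsX, hπxs⟩, _⟩ := hai s hsY hdts
        have hrelX : GibbsRel X xs x := by
          apply mytail xs x hxsX (hDX hxD) (by rw [hπxs]; exact hdts) hdty
          exact ⟨N₀, fun k hk => by rw [hπxs]; exact htail k hk⟩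
        refine Set.mem_image_of_mem π ⟨hxD, subset_toMeasurable μ _ ?_⟩
        exact ⟨xs, ⟨by rw [Set.mem_preimage, hπxs]; exact hsS, hxsX⟩, hrelX⟩
      · exact Or.inl hyG
    have h2 : μ.map π (π '' (D ∩ N')) = 0 := by
      rw [(himgD (D ∩ N') Set.inter_subset_left (hDmeas.inter hN'meas)).2]
      exact measure_mono_null Set.inter_subset_right hN'null
    refine le_antisymm ?_ zero_le
    calc μ.map π {y | ∃ s ∈ S, GibbsRel Y s y} ≤ μ.map π (Gᶜ ∪ π '' (D ∩ N')) :=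
      measure_mono hkey
    _ ≤ μ.map π Gᶜ + μ.map π (π '' (D ∩ N')) := measure_union_le _ _
    _ = 0 := by rw [hνGc, h2, add_zero]
  refine ⟨hns, ?_⟩
  intro φ hφcoc hφgibbs
  set g : (ℤ → B) → (ℤ → A) := fun y =>
    if h : ∃ x, (x ∈ X ∧ DoublyTransitive X x) ∧ π x = y then h.choose else xstar with hgdef
  have hgfix : ∀ x, x ∈ X → DoublyTransitive X x → g (π x) = x := by
    intro x hx hdt
    have h : ∃ x', (x' ∈ X ∧ DoublyTransitive X x') ∧ π x' = π x := ⟨x, ⟨hx, hdt⟩, rfl⟩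
    simp only [hgdef, dif_pos h]
    obtain ⟨⟨hcX, hcdt⟩, hcπ⟩ := h.choose_spec
    exact hinj2 _ x hcX hx (hdtim x hx hdt).2 hcπ
  have hgood : ∀ y ∈ G, g y ∈ D ∧ π (g y) = y := by
    rintro y ⟨d, hdD, rfl⟩
    rw [hgfix d (hDX hdD) (hDdt d hdD)]
    exact ⟨hdD, rfl⟩
  refine ⟨fun y y' => φ (g y) (g y'), ?_, ?_⟩
  · intro x x' hx hx' hdt hdt' _
    show φ (g (π x)) (g (π x')) = φ x x'
    rw [hgfix x hx hdt, hgfix x' hx' hdt']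
  intro S T ψ hψ E hES hEmeas
  obtain ⟨hSm, hTm, hbij, himg, hpre, hrel⟩ := hψ
  set S₁ : Set (ℤ → B) := (S ∩ G) ∩ (S ∩ ψ ⁻¹' (T ∩ G)) with hS₁
  have hS₁S : S₁ ⊆ S := fun z hz => hz.1.1
  have hS₁G : S₁ ⊆ G := fun z hz => hz.1.2
  have hS₁ψ : ∀ z ∈ S₁, ψ z ∈ T ∩ G := fun z hz => hz.2.2
  have hS₁meas : MeasurableSet S₁ :=
    (hSm.inter hGmeas).inter (hpre (T ∩ G) Set.inter_subset_left (hTm.inter hGmeas))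
  have hSdiff : μ.map π (S \ S₁) = 0 := by
    have hTGnull : μ.map π (T \ G) = 0 :=
      measure_mono_null (fun z hz => hz.2) hνGc
    have hsat := hns (T \ G) (hTm.diff hGmeas) hTGnull
    have hsub : S \ S₁ ⊆ Gᶜ ∪ {z | ∃ t ∈ T \ G, GibbsRel Y t z} := by
      intro z hz
      by_cases hzG : z ∈ G
      · right
        have hzT : ψ z ∈ T := hbij.mapsTo hz.1
        have hzTG : ψ z ∉ T ∩ G := by
          intro hc
          exact hz.2 ⟨⟨hz.1, hzG⟩, hz.1, hc⟩
        exact ⟨ψ z, ⟨hzT, fun hc => hzTG ⟨hzT, hc⟩⟩, gibbsRel_symm (hrel z hz.1)⟩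
      · exact Or.inl hzG
    refine le_antisymm ?_ zero_le
    calc μ.map π (S \ S₁) ≤ μ.map π (Gᶜ ∪ {z | ∃ t ∈ T \ G, GibbsRel Y t z}) :=
      measure_mono hsub
    _ ≤ μ.map π Gᶜ + μ.map π {z | ∃ t ∈ T \ G, GibbsRel Y t z} := measure_union_le _ _
    _ = 0 := by rw [hνGc, hsat, add_zero]
  set E₁ : Set (ℤ → B) := E ∩ S₁ with hE₁
  have hE₁meas : MeasurableSet E₁ := hEmeas.inter hS₁meas
  have hE₁S₁ : E₁ ⊆ S₁ := Set.inter_subset_right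
  have hEdiffnull : μ.map π (E \ E₁) = 0 := by
    refine measure_mono_null ?_ hSdiff
    intro z hz
    exact ⟨hES hz.1, fun hc => hz.2 ⟨hz.1, hc⟩⟩
  set St : Set (ℤ → A) := D ∩ π ⁻¹' S₁ with hSt
  set T₁ : Set (ℤ → B) := ψ '' S₁ with hT₁
  have hT₁meas : MeasurableSet T₁ := himg S₁ hS₁S hS₁meas
  have hT₁T : T₁ ⊆ T := by
    rintro _ ⟨z, hz, rfl⟩
    exact hbij.mapsTo (hS₁S hz)
  set Tt : Set (ℤ → A) := D ∩ π ⁻¹' T₁ with hTt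
  have hStmeas : MeasurableSet St := hDmeas.inter (hπmeas hS₁meas)
  have hTtmeas : MeasurableSet Tt := hDmeas.inter (hπmeas hT₁meas)
  set ψt : (ℤ → A) → (ℤ → A) := fun z => g (ψ (π z)) with hψt
  have hmaps : ∀ z ∈ St, ψt z ∈ Tt ∧ π (ψt z) = ψ (π z) := by
    intro z hz
    have h1 : ψ (π z) ∈ T ∩ G := hS₁ψ (π z) hz.2
    have h2 := hgood (ψ (π z)) h1.2
    refine ⟨⟨h2.1, ?_⟩, h2.2⟩
    rw [Set.mem_preimage, h2.2]
    exact ⟨π z, hz.2, rfl⟩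
  have hdtYD : ∀ z ∈ D, DoublyTransitive Y (π z) :=
    fun z hz => (hdtim z (hDX hz) (hDdt z hz)).2
  have hrelt : ∀ z ∈ St, GibbsRel X z (ψt z) := by
    intro z hz
    obtain ⟨⟨hψtD, _⟩, hπψt⟩ := hmaps z hz
    apply mytail z (ψt z) (hDX hz.1) (hDX hψtD) (hdtYD z hz.1) (hdtYD _ hψtD)
    obtain ⟨_, _, N₀, ht⟩ := hrel (π z) (hS₁S hz.2)
    exact ⟨N₀, fun k hk => by rw [hπψt]; exact ht k hk⟩
  have hbijt : Set.BijOn ψt St Tt := by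
    refine ⟨fun z hz => (hmaps z hz).1, ?_, ?_⟩
    · intro z₁ hz₁ z₂ hz₂ heq
      have e1 := (hmaps z₁ hz₁).2
      have e2 := (hmaps z₂ hz₂).2
      have h5 : ψ (π z₁) = ψ (π z₂) := by rw [← e1, ← e2, heq]
      have hππ : π z₁ = π z₂ := hbij.injOn (hS₁S hz₁.2) (hS₁S hz₂.2) h5
      exact hinjD hz₁.1 hz₂.1 hππ
    · rintro t ⟨htD, htT₁⟩
      rw [Set.mem_preimage] at htT₁
      obtain ⟨s, hsS₁, hst⟩ := htT₁
      obtain ⟨d, hdD, hds⟩ := hS₁G hsS₁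
      have hdSt : d ∈ St := ⟨hdD, by rw [Set.mem_preimage, hds]; exact hsS₁⟩
      refine ⟨d, hdSt, ?_⟩
      have h6 := (hmaps d hdSt).2
      rw [hds] at h6
      exact hinjD (hmaps d hdSt).1.1 htD (by rw [h6, hst])
  have himgt : ∀ E' : Set (ℤ → A), E' ⊆ St → MeasurableSet E' →
      MeasurableSet (ψt '' E') := by
    intro E' hE'St hE'meas
    have hE'D : E' ⊆ D := fun z hz => (hE'St hz).1
    have hped := himgD E' hE'D hE'meas
    have hπE'S₁ : π '' E' ⊆ S₁ := by rintro t ⟨e, he, rfl⟩; exact (hE'St he).2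
    have h4 : MeasurableSet (ψ '' (π '' E')) := himg _ (hπE'S₁.trans hS₁S) hped.1
    have heq : ψt '' E' = Tt ∩ π ⁻¹' (ψ '' (π '' E')) := by
      apply Set.Subset.antisymm
      · rintro _ ⟨e, he, rfl⟩
        refine ⟨(hmaps e (hE'St he)).1, ?_⟩
        rw [Set.mem_preimage, (hmaps e (hE'St he)).2]
        exact ⟨π e, ⟨e, he, rfl⟩, rfl⟩
      · rintro t ⟨htTt, ht2⟩
        rw [Set.mem_preimage] at ht2
        obtain ⟨-, ⟨e, he, rfl⟩, hst⟩ := ht2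
        refine ⟨e, he, ?_⟩
        exact hinjD (hmaps e (hE'St he)).1.1 htTt.1 (by rw [(hmaps e (hE'St he)).2, hst])
    rw [heq]
    exact hTtmeas.inter (hπmeas h4)
  have hpret : ∀ E' : Set (ℤ → A), E' ⊆ Tt → MeasurableSet E' →
      MeasurableSet (St ∩ ψt ⁻¹' E') := by
    intro E' hE'Tt hE'meas
    have hE'D : E' ⊆ D := fun z hz => (hE'Tt hz).1
    have hped := himgD E' hE'D hE'meas
    have hπE'T : π '' E' ⊆ T := by rintro t ⟨e, he, rfl⟩; exact hT₁T (hE'Tt he).2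
    have h4 : MeasurableSet (S ∩ ψ ⁻¹' (π '' E')) := hpre _ hπE'T hped.1
    have heq : St ∩ ψt ⁻¹' E' = St ∩ π ⁻¹' (S ∩ ψ ⁻¹' (π '' E')) := by
      ext z
      constructor
      · rintro ⟨hzSt, hzE'⟩
        refine ⟨hzSt, hS₁S hzSt.2, ?_⟩
        show ψ (π z) ∈ π '' E'
        rw [← (hmaps z hzSt).2]
        exact ⟨ψt z, hzE', rfl⟩
      · rintro ⟨hzSt, hzS, hz2⟩
        refine ⟨hzSt, ?_⟩
        rw [Set.mem_preimage] at hz2 ⊢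
        obtain ⟨e, heE', hπe⟩ := hz2
        have h7 : ψt z = e :=
          hinjD (hmaps z hzSt).1.1 (hE'D heE') (by rw [(hmaps z hzSt).2, ← hπe])
        rw [h7]; exact heE'
    rw [heq]
    exact hStmeas.inter (hπmeas h4)
  have hholo : IsHolonomy (GibbsRel X) St Tt ψt :=
    ⟨hStmeas, hTtmeas, hbijt, himgt, hpret, hrelt⟩
  set Et : Set (ℤ → A) := D ∩ π ⁻¹' E₁ with hEt
  have hEtmeas : MeasurableSet Et := hDmeas.inter (hπmeas hE₁meas)
  have hEtSt : Et ⊆ St := fun z hz => ⟨hz.1, hE₁S₁ hz.2⟩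
  have hmain := hφgibbs St Tt ψt hholo Et hEtSt hEtmeas
  -- identify the left-hand sides
  have hE₁G : E₁ ⊆ G := fun z hz => hS₁G hz.2
  have hE₁eq : E₁ = π '' Et := by
    apply Set.Subset.antisymm
    · intro y hy
      obtain ⟨d, hdD, rfl⟩ := hE₁G hy
      exact ⟨d, ⟨hdD, hy⟩, rfl⟩
    · rintro _ ⟨e, he, rfl⟩
      exact he.2
  have him2 : ψ '' E₁ = π '' (ψt '' Et) := by
    rw [hE₁eq, ← Set.image_comp, ← Set.image_comp]
    apply Set.image_congr
    intro e he
    exact ((hmaps e (hEtSt he)).2).symm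
  have hψtEt_sub : ψt '' Et ⊆ D := by
    rintro _ ⟨e, he, rfl⟩
    exact (hmaps e (hEtSt he)).1.1
  have hψtEt_meas : MeasurableSet (ψt '' Et) := himgt Et hEtSt hEtmeas
  have hLHS : μ.map π (ψ '' E₁) = μ (ψt '' Et) := by
    rw [him2, (himgD _ hψtEt_sub hψtEt_meas).2]
  have hψEdiff : μ.map π (ψ '' (E \ E₁)) = 0 := by
    have hsub : ψ '' (E \ E₁) ⊆ {z | ∃ t ∈ E \ E₁, GibbsRel Y t z} := by
      rintro _ ⟨e, he, rfl⟩
      exact ⟨e, he, hrel e (hES he.1)⟩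
    exact measure_mono_null hsub (hns (E \ E₁) (hEmeas.diff hE₁meas) hEdiffnull)
  have hLHS2 : μ.map π (ψ '' E) = μ.map π (ψ '' E₁) := by
    refine le_antisymm ?_ (measure_mono (Set.image_mono Set.inter_subset_left))
    calc μ.map π (ψ '' E) ≤ μ.map π (ψ '' E₁ ∪ ψ '' (E \ E₁)) := by
          refine measure_mono ?_
          rw [← Set.image_union]
          apply Set.image_mono
          intro z hz
          by_cases h : z ∈ E₁
          · exact Or.inl h
          · exact Or.inr ⟨hz, h⟩
    _ ≤ μ.map π (ψ '' E₁) + μ.map π (ψ '' (E \ E₁)) := measure_union_le _ _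
    _ = μ.map π (ψ '' E₁) := by rw [hψEdiff, add_zero]
  -- identify the integrands
  have hint1 : ∫⁻ z in Et, ENNReal.ofReal (Real.exp (φ z (ψt z))) ∂μ
      = ∫⁻ z in Et, ENNReal.ofReal (Real.exp (φ (g (π z)) (g (ψ (π z))))) ∂μ := by
    apply lintegral_congr_ae
    filter_upwards [ae_restrict_mem hEtmeas] with z hz
    rw [hgfix z (hDX hz.1) (hDdt z hz.1)]
  -- change of variables
  have hCOV : ∀ f : (ℤ → B) → ℝ≥0∞,
      ∫⁻ z in Et, f (π z) ∂μ = ∫⁻ y in E₁, f y ∂(μ.map π) := by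
    intro f
    have h1 : (μ.map π).restrict E₁ = (μ.restrict (π ⁻¹' E₁)).map π :=
      Measure.restrict_map hπmeas hE₁meas
    have h2 : μ.restrict (π ⁻¹' E₁) = μ.restrict Et := by
      apply Measure.ext
      intro s hs
      rw [Measure.restrict_apply hs, Measure.restrict_apply hs]
      rw [inter_full (s ∩ π ⁻¹' E₁)]
      congr 1
      ext z
      constructor
      · rintro ⟨⟨ha, hb⟩, hc⟩
        exact ⟨ha, hc, hb⟩
      · rintro ⟨ha, hc, hb⟩
        exact ⟨⟨ha, hb⟩, hc⟩
    have hemb : MeasurableEmbedding (Et.restrict π) :=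
      ContinuousOn.measurableEmbedding hEtmeas hcont.continuousOn
        (hinjD.mono (fun z hz => hz.1))
    have hsub : MeasurableEmbedding ((↑) : Et → (ℤ → A)) :=
      MeasurableEmbedding.subtype_coe hEtmeas
    set κ : Measure Et := μ.comap (↑) with hκ
    have hκval : κ.map ((↑) : Et → (ℤ → A)) = μ.restrict Et := by
      rw [hκ, hsub.map_comap, Subtype.range_coe]
    have h3 : (μ.restrict Et).map π = κ.map (Et.restrict π) := by
      rw [← hκval, Measure.map_map hπmeas hsub.measurable]
      rfl
    calc ∫⁻ z in Et, f (π z) ∂μ = ∫⁻ z, f (π z) ∂(κ.map Subtype.val) := by rw [hκval]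
    _ = ∫⁻ d, f (π d.1) ∂κ := hsub.lintegral_map (fun z => f (π z))
    _ = ∫⁻ y, f y ∂(κ.map (Et.restrict π)) := (hemb.lintegral_map f).symm
    _ = ∫⁻ y, f y ∂((μ.restrict Et).map π) := by rw [h3]
    _ = ∫⁻ y, f y ∂((μ.map π).restrict E₁) := by rw [h1, h2]
    _ = ∫⁻ y in E₁, f y ∂(μ.map π) := rfl
  have hRHSred : ∫⁻ y in E, ENNReal.ofReal (Real.exp (φ (g y) (g (ψ y)))) ∂(μ.map π)
      = ∫⁻ y in E₁, ENNReal.ofReal (Real.exp (φ (g y) (g (ψ y)))) ∂(μ.map π) := by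
    refine le_antisymm ?_
      (lintegral_mono' (Measure.restrict_mono Set.inter_subset_left le_rfl) le_rfl)
    calc ∫⁻ y in E, ENNReal.ofReal (Real.exp (φ (g y) (g (ψ y)))) ∂(μ.map π)
        ≤ ∫⁻ y in E₁ ∪ (E \ E₁), ENNReal.ofReal (Real.exp (φ (g y) (g (ψ y)))) ∂(μ.map π) := by
          refine lintegral_mono' (Measure.restrict_mono ?_ le_rfl) le_rfl
          intro z hz
          by_cases h : z ∈ E₁
          · exact Or.inl h
          · exact Or.inr ⟨hz, h⟩
    _ ≤ ∫⁻ y, ENNReal.ofReal (Real.exp (φ (g y) (g (ψ y))))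
          ∂((μ.map π).restrict E₁ + (μ.map π).restrict (E \ E₁)) :=
        lintegral_mono' (Measure.restrict_union_le _ _) le_rfl
    _ = ∫⁻ y in E₁, ENNReal.ofReal (Real.exp (φ (g y) (g (ψ y)))) ∂(μ.map π)
          + ∫⁻ y in (E \ E₁), ENNReal.ofReal (Real.exp (φ (g y) (g (ψ y)))) ∂(μ.map π) :=
        lintegral_add_measure _ _ _
    _ = ∫⁻ y in E₁, ENNReal.ofReal (Real.exp (φ (g y) (g (ψ y)))) ∂(μ.map π) := by
        rw [setLIntegral_measure_zero _ _ hEdiffnull, add_zero]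
  show μ.map π (ψ '' E)
      = ∫⁻ y in E, ENNReal.ofReal (Real.exp (φ (g y) (g (ψ y)))) ∂(μ.map π)
  rw [hLHS2, hLHS, hmain, hint1, hRHSred]
  exact hCOV (fun y => ENNReal.ofReal (Real.exp (φ (g y) (g (ψ y)))))
end

section
/- Let X be an irreducible shift of finite type, Y a sofic shift, and pi: X -> Y an almost invertible factor code (assumed one-block with a magic symbol). Let nu be a fully supported, shift-invariant, ergodic, T_Y-nonsingular measure on Y, and let mu be any shift-invariant measure on X with pi_* mu = nu. Then mu has full support on X. -/
open MeasureTheory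

section Lemmas
variable {A : Type*}

lemma occursAt_iff' {x : ℤ → A} {w : List A} {i : ℤ} :
    occursAt x w i ↔ ∀ (j : ℕ) (h : j < w.length), x (i + j) = w[j] := by
  constructor
  · intro H j h; exact H ⟨j, h⟩
  · intro H j; exact H j.1 j.2

lemma occursAt_shiftZ {x : ℤ → A} {w : List A} {i k : ℤ} :
    occursAt (shiftZ k x) w i ↔ occursAt x w (i + k) := by
  simp only [occursAt_iff', shiftZ]
  constructor
  · intro H j h; have := H j h; rw [show i + k + (j:ℤ) = i + j + k by ring]; exact this
  · intro H j h; have := H j h; rw [show i + (j:ℤ) + k = i + k + j by ring]; exact this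

lemma occursAt_append {x : ℤ → A} {u v : List A} {i : ℤ} :
    occursAt x (u ++ v) i ↔ occursAt x u i ∧ occursAt x v (i + u.length) := by
  simp only [occursAt_iff']
  constructor
  · intro H
    constructor
    · intro j h
      have h2 : j < (u ++ v).length := by simp; omega
      have := H j h2
      rwa [List.getElem_append_left h] at this
    · intro j h
      have h2 : u.length + j < (u ++ v).length := by simp; omega
      have := H (u.length + j) h2
      rw [List.getElem_append_right (by omega)] at this
      simp only [Nat.add_sub_cancel_left] at this
      rw [show i + (u.length : ℤ) + j = i + ((u.length + j : ℕ) : ℤ) by push_cast; ring]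
      exact this
  · intro ⟨H1, H2⟩ j h
    rcases lt_or_ge j u.length with hj | hj
    · rw [List.getElem_append_left hj]; exact H1 j hj
    · rw [List.getElem_append_right hj]
      have h3 : j - u.length < v.length := by simp at h; omega
      have := H2 (j - u.length) h3
      rw [show i + (u.length:ℤ) + ((j - u.length : ℕ):ℤ) = i + j by
        push_cast [Nat.cast_sub hj]; ring] at this
      exact this

lemma exists_occursAt_zero {X : Set (ℤ → A)} [TopologicalSpace A]
    (hX : IsShiftSpace X) {w : List A} (hw : InLanguage X w) :
    ∃ x ∈ X, occursAt x w 0 := by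
  obtain ⟨x, hxX, i, hocc⟩ := hw
  refine ⟨shiftZ i x, hX.2 i x hxX, ?_⟩
  rw [occursAt_shiftZ, zero_add]; exact hocc

lemma inLanguage_mono {X : Set (ℤ → A)} {x : ℤ → A} {w : List A} {i : ℤ}
    (hx : x ∈ X) (h : occursAt x w i) : InLanguage X w := ⟨x, hx, i, h⟩

end Lemmas

lemma exists_doublyTransitive {A : Type*} [TopologicalSpace A] [Countable A]
    {X : Set (ℤ → A)} (hX : IsShiftSpace X) (hXirr : IrreducibleShift X)
    {w : List A} (hw : InLanguage X w) (hwne : w ≠ []) :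
    ∃ x ∈ X, DoublyTransitive X x ∧ occursAt x w 0 := by
  classical
  -- enumeration of nonempty language words, each infinitely often
  set L : Set (List A) := {v | InLanguage X v ∧ v ≠ []} with hLdef
  have hLne : L.Nonempty := ⟨w, hw, hwne⟩
  obtain ⟨f, hf⟩ := (Set.to_countable L).exists_eq_range hLne
  set e : ℕ → List A := fun k => f (Nat.unpair k).1 with he
  have he1 : ∀ k, InLanguage X (e k) ∧ e k ≠ [] := by
    intro k
    have : e k ∈ L := by rw [hf]; exact ⟨(Nat.unpair k).1, rfl⟩
    exact this
  have he2 : ∀ v ∈ L, ∀ N : ℕ, ∃ k, N ≤ k ∧ e k = v := by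
    intro v hv N
    rw [hf] at hv; obtain ⟨m, hm⟩ := hv
    exact ⟨Nat.pair m N, Nat.right_le_pair m N, by simp [he, Nat.unpair_pair, hm]⟩
  -- base point
  obtain ⟨x₀, hx₀X, hx₀w⟩ := exists_occursAt_zero hX hw
  -- the extension step
  have hstep : ∀ (k : ℕ) (x : ℤ → A) (p r : ℤ), ∃ (x' : ℤ → A) (p' r' : ℤ),
      x ∈ X → p ≤ r → (x' ∈ X ∧ p' + 1 ≤ p ∧ r + 1 ≤ r' ∧
        (∀ n, p ≤ n → n < r → x' n = x n) ∧
        occursAt x' (e k) p' ∧ occursAt x' (e k) (r' - (e k).length)) := by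
    intro k x p r
    by_cases hx : x ∈ X ∧ p ≤ r
    swap
    · exact ⟨x, p, r, fun h1 h2 => absurd ⟨h1, h2⟩ hx⟩
    obtain ⟨hxX, hpr⟩ := hx
    have heklen : 1 ≤ (e k).length := List.length_pos_iff.mpr (he1 k).2
    set m := (r - p).toNat with hmdef
    have hm : (m : ℤ) = r - p := Int.toNat_of_nonneg (by omega)
    set c : List A := List.ofFn (fun j : Fin m => x (p + j)) with hcdef
    have hclen : c.length = m := by simp [hcdef]
    have hcget : ∀ (j : ℕ) (hj : j < c.length), c.get ⟨j, hj⟩ = x (p + (j:ℤ)) := by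
      intro j hj
      simp [hcdef]
    have hoccc : occursAt x c p := by
      intro j
      exact (hcget j.1 j.2).symm
    obtain ⟨g, hg⟩ := hXirr c (e k) ⟨x, hxX, p, hoccc⟩ (he1 k).1
    obtain ⟨g', hg'⟩ := hXirr (e k) (c ++ g ++ e k) (he1 k).1 hg
    obtain ⟨z, hzX, hz0⟩ := exists_occursAt_zero hX hg'
    rw [occursAt_append, occursAt_append, occursAt_append, occursAt_append] at hz0
    obtain ⟨⟨hz_ek0, _⟩, ⟨hz_c, _⟩, hz_ekR⟩ := hz0
    set d : ℤ := ((e k ++ g').length : ℤ) with hddef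
    have hd1 : 1 ≤ d := by simp only [hddef, List.length_append]; push_cast; omega
    rw [zero_add] at hz_c hz_ekR
    -- positions in z : e k at 0, c at d, e k at d + m + g.length
    have hz_ekR' : occursAt z (e k) (d + m + g.length) := by
      rw [show d + (m:ℤ) + (g.length:ℤ) = d + ((c ++ g).length : ℤ) by
        rw [List.length_append]; push_cast; rw [hclen]; push_cast; ring]
      exact hz_ekR
    refine ⟨shiftZ (d - p) z, p - d, p + m + g.length + (e k).length,
      fun _ _ => ⟨hX.2 _ z hzX, by omega, by omega, ?_, ?_, ?_⟩⟩
    · intro n hn1 hn2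
      have hj : (n - p).toNat < c.length := by rw [hclen]; omega
      have h1 := occursAt_iff'.mp hz_c (n - p).toNat hj
      simp only [hcdef, List.getElem_ofFn] at h1
      have hcast : ((n - p).toNat : ℤ) = n - p := Int.toNat_of_nonneg (by omega)
      rw [hcast] at h1
      show z (n + (d - p)) = x n
      rw [show n + (d - p) = d + (n - p) by ring, h1,
        show p + (n - p) = n by ring]
    · rw [occursAt_shiftZ, show p - d + (d - p) = 0 by ring]; exact hz_ek0
    · rw [occursAt_shiftZ,
        show p + ↑m + ↑g.length + ↑(e k).length - ↑(e k).length + (d - p)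
          = d + ↑m + ↑g.length by ring]
      exact hz_ekR'
  choose F P R hF using hstep
  -- the recursively defined sequence of points and windows
  let T : ℕ → (ℤ → A) × ℤ × ℤ := fun k =>
    Nat.rec (x₀, 0, (w.length : ℤ))
      (fun k ih => (F k ih.1 ih.2.1 ih.2.2, P k ih.1 ih.2.1 ih.2.2,
        R k ih.1 ih.2.1 ih.2.2)) k
  let xs : ℕ → (ℤ → A) := fun k => (T k).1
  let ps : ℕ → ℤ := fun k => (T k).2.1
  let rs : ℕ → ℤ := fun k => (T k).2.2
  have hT0 : xs 0 = x₀ ∧ ps 0 = 0 ∧ rs 0 = (w.length : ℤ) := ⟨rfl, rfl, rfl⟩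
  have hTsucc : ∀ k, xs (k+1) = F k (xs k) (ps k) (rs k) ∧
      ps (k+1) = P k (xs k) (ps k) (rs k) ∧ rs (k+1) = R k (xs k) (ps k) (rs k) :=
    fun k => ⟨rfl, rfl, rfl⟩
  have hwlen : (0:ℤ) ≤ (w.length : ℤ) := by positivity
  have hInv : ∀ k, xs k ∈ X ∧ ps k ≤ -(k:ℤ) ∧ (w.length:ℤ) + k ≤ rs k := by
    intro k
    induction k with
    | zero => exact ⟨hx₀X, by rw [hT0.2.1]; simp, by rw [hT0.2.2]; simp⟩
    | succ k ih =>
      have hpr : ps k ≤ rs k := by obtain ⟨-, h2, h3⟩ := ih; omega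
      obtain ⟨h1, h2, h3, -⟩ := hF k (xs k) (ps k) (rs k) ih.1 hpr
      rw [(hTsucc k).1, (hTsucc k).2.1, (hTsucc k).2.2]
      refine ⟨h1, ?_, ?_⟩ <;> push_cast <;> omega
  have hSpec : ∀ k, ps (k+1) + 1 ≤ ps k ∧ rs k + 1 ≤ rs (k+1) ∧
      (∀ n, ps k ≤ n → n < rs k → xs (k+1) n = xs k n) ∧
      occursAt (xs (k+1)) (e k) (ps (k+1)) ∧
      occursAt (xs (k+1)) (e k) (rs (k+1) - (e k).length) := by
    intro k
    have hpr : ps k ≤ rs k := by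
      obtain ⟨-, h2, h3⟩ := hInv k; omega
    have h := hF k (xs k) (ps k) (rs k) (hInv k).1 hpr
    rw [(hTsucc k).1, (hTsucc k).2.1, (hTsucc k).2.2]
    exact ⟨h.2.1, h.2.2.1, h.2.2.2.1, h.2.2.2.2.1, h.2.2.2.2.2⟩
  have hpmono : ∀ k l, k ≤ l → ps l ≤ ps k :=
    fun k l h => antitone_nat_of_succ_le (fun n => by have := (hSpec n).1; omega) h
  have hrmono : ∀ k l, k ≤ l → rs k ≤ rs l :=
    fun k l h => monotone_nat_of_le_succ (fun n => by have := (hSpec n).2.1; omega) h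
  -- chain agreement
  have hchain : ∀ k l, k ≤ l → ∀ n, ps k ≤ n → n < rs k → xs l n = xs k n := by
    intro k l h
    induction l with
    | zero => intro n _ _; have : k = 0 := Nat.le_zero.mp h; rw [this]
    | succ l ih =>
      intro n h1 h2
      rcases Nat.lt_or_ge k (l+1) with h' | h'
      · have hkl : k ≤ l := by omega
        rw [(hSpec l).2.2.1 n (le_trans (hpmono k l hkl) h1)
          (lt_of_lt_of_le h2 (hrmono k l hkl))]
        exact ih hkl n h1 h2
      · have : k = l + 1 := by omega
        rw [this]
  -- coverage
  have hcover : ∀ n : ℤ, ∃ k : ℕ, ps k ≤ n ∧ n < rs k := by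
    intro n
    refine ⟨n.natAbs + 1, ?_, ?_⟩
    · have h := (hInv (n.natAbs + 1)).2.1
      omega
    · have h := (hInv (n.natAbs + 1)).2.2
      omega
  -- the limit point
  let xstar : ℤ → A := fun n => xs (hcover n).choose n
  have hagree : ∀ k n, ps k ≤ n → n < rs k → xstar n = xs k n := by
    intro k n h1 h2
    obtain ⟨hk1, hk2⟩ := (hcover n).choose_spec
    rcases Nat.le_total (hcover n).choose k with h | h
    · exact (hchain _ k h n hk1 hk2).symm
    · exact hchain k _ h n h1 h2
  have hxstarX : xstar ∈ X := by
    have htend : Filter.Tendsto xs Filter.atTop (nhds xstar) := by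
      rw [tendsto_pi_nhds]
      intro n
      obtain ⟨k₀, hk₀1, hk₀2⟩ := hcover n
      apply Filter.Tendsto.congr' (f₁ := fun _ => xstar n)
      · filter_upwards [Filter.eventually_ge_atTop k₀] with k hk
        exact hagree k n (le_trans (hpmono k₀ k hk) hk₀1)
          (lt_of_lt_of_le hk₀2 (hrmono k₀ k hk))
      · exact tendsto_const_nhds
    exact hX.1.mem_of_tendsto htend (Filter.Eventually.of_forall (fun k => (hInv k).1))
  have hxstarw : occursAt xstar w 0 := by
    rw [occursAt_iff']; intro j hj
    rw [hagree 0 (0 + j) (by rw [hT0.2.1]; omega)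
      (by rw [hT0.2.2]; omega), hT0.1]
    exact occursAt_iff'.mp hx₀w j hj
  refine ⟨xstar, hxstarX, ?_, hxstarw⟩
  -- double transitivity
  intro v hv
  by_cases hvne : v = []
  · subst hvne
    constructor <;> intro N <;> exact ⟨N, le_refl N, fun j => j.elim0⟩
  have hvL : v ∈ L := ⟨hv, hvne⟩
  have hocc_in : ∀ k, occursAt (xs (k+1)) v (ps (k+1)) → (v.length : ℤ) ≤ k →
      occursAt xstar v (ps (k+1)) := by
    intro k hocc hk
    rw [occursAt_iff'] at hocc ⊢
    intro j hj
    have hub : ps (k+1) + (j:ℤ) < rs (k+1) := by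
      have h1 := (hInv (k+1)).2.1
      have h2 := (hInv (k+1)).2.2
      push_cast at h1 h2
      omega
    rw [hagree (k+1) _ (by omega) hub]
    exact hocc j hj
  constructor
  · -- occurrences to the right
    intro N
    obtain ⟨k, hk1, hk2⟩ := he2 v hvL (N.natAbs + v.length)
    have hocc := (hSpec k).2.2.2.2
    rw [hk2] at hocc
    refine ⟨rs (k+1) - v.length, ?_, ?_⟩
    · have h2 := (hInv (k+1)).2.2
      push_cast at h2
      have : (N : ℤ) ≤ N.natAbs := Int.le_natAbs
      omega
    · rw [occursAt_iff'] at hocc ⊢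
      intro j hj
      have hlb : ps (k+1) ≤ rs (k+1) - (v.length:ℤ) + (j:ℤ) := by
        have h1 := (hInv (k+1)).2.1
        have h2 := (hInv (k+1)).2.2
        push_cast at h1 h2
        omega
      have hub : rs (k+1) - (v.length:ℤ) + (j:ℤ) < rs (k+1) := by omega
      rw [hagree (k+1) _ hlb hub]
      exact hocc j hj
  · -- occurrences to the left
    intro N
    obtain ⟨k, hk1, hk2⟩ := he2 v hvL (N.natAbs + v.length)
    have hocc := (hSpec k).2.2.2.1
    rw [hk2] at hocc
    refine ⟨ps (k+1), ?_, ?_⟩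
    · have h1 := (hInv (k+1)).2.1
      push_cast at h1
      omega
    · exact hocc_in k hocc (by omega)

lemma doublyTransitive_image {A B : Type*} {X : Set (ℤ → A)} {Y : Set (ℤ → B)} (Q : A → B)
    (hfactor : (fun x => Q ∘ x) '' X = Y) {x : ℤ → A} (hx : x ∈ X)
    (hdt : DoublyTransitive X x) : DoublyTransitive Y (Q ∘ x) := by
  intro v hv
  obtain ⟨y, hyY, i, hocc⟩ := hv
  rw [← hfactor] at hyY
  obtain ⟨z, hzX, hzy⟩ := hyY
  have hu : InLanguage X (List.ofFn fun j : Fin v.length => z (i + j)) := by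
    refine ⟨z, hzX, i, ?_⟩
    rw [occursAt_iff']
    intro j hj
    simp [List.getElem_ofFn]
  obtain ⟨hR, hL⟩ := hdt _ hu
  have key : ∀ i', occursAt x (List.ofFn fun j : Fin v.length => z (i + j)) i' →
      occursAt (Q ∘ x) v i' := by
    intro i' h
    rw [occursAt_iff'] at h ⊢
    intro j hj
    have h2 := h j (by simpa using hj)
    simp only [List.getElem_ofFn] at h2
    show Q (x (i' + j)) = v[j]
    rw [h2]
    have h3 := occursAt_iff'.mp hocc j hj
    rw [← h3, ← hzy]
    rfl
  exact ⟨fun N => (hR N).imp (fun i' hi' => ⟨hi'.1, key i' hi'.2⟩),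
         fun N => (hL N).imp (fun i' hi' => ⟨hi'.1, key i' hi'.2⟩)⟩

theorem stmt19' {A B : Type*} [Fintype A] [TopologicalSpace A] [DiscreteTopology A]
    [MeasurableSpace A] [BorelSpace A]
    [Fintype B] [TopologicalSpace B] [DiscreteTopology B]
    [MeasurableSpace B] [BorelSpace B]
    (X : Set (ℤ → A)) (hX : IsShiftSpace X) (hXirr : IrreducibleShift X)
    (Y : Set (ℤ → B))
    (Q : A → B) (hfactor : (fun x => Q ∘ x) '' X = Y)
    (hai : ∀ y ∈ Y, DoublyTransitive Y y → ∃! x, x ∈ X ∧ Q ∘ x = y)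
    (ν : Measure (ℤ → B)) (hνprob : IsProbabilityMeasure ν)
    (hνsupp : FullSupportOn ν Y)
    (μ : Measure (ℤ → A)) (hμprob : IsProbabilityMeasure μ) (hμconc : μ X = 1)
    (hμinv : μ.map (shiftZ 1) = μ) (hlift : μ.map (fun x => Q ∘ x) = ν) :
    FullSupportOn μ X := by
  classical
  intro U hU hUX
  obtain ⟨x₀, hx₀U, hx₀X⟩ := hUX
  -- extract a cylinder around x₀ inside U
  obtain ⟨I, u, hIu, hsub⟩ := isOpen_pi_iff.mp hU x₀ hx₀U
  set m : ℕ := I.sup (fun i => i.natAbs) with hmdef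
  have hIm : ∀ i ∈ I, i.natAbs ≤ m := fun i hi => Finset.le_sup hi
  set i₀ : ℤ := -(m:ℤ) with hi₀def
  set w : List A := List.ofFn (fun j : Fin (2*m+1) => x₀ (i₀ + j)) with hwdef
  have hwlen : w.length = 2*m+1 := by simp [hwdef]
  have hwne : w ≠ [] := by
    intro h; rw [h] at hwlen; simp at hwlen
  have hwget : ∀ (j : ℕ) (hj : j < w.length), w[j] = x₀ (i₀ + (j:ℤ)) := by
    intro j hj
    simp only [hwdef, List.getElem_ofFn]
  have hwX : InLanguage X w := by
    refine ⟨x₀, hx₀X, i₀, ?_⟩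
    rw [occursAt_iff']
    intro j hj
    rw [hwget j hj]
  have hsub2 : {z : ℤ → A | occursAt z w i₀} ⊆ U := by
    intro z hz
    apply hsub
    rw [Set.mem_pi]
    intro i hi
    have h1 : -(m:ℤ) ≤ i ∧ i ≤ (m:ℤ) := by
      have := hIm i hi; omega
    have hj : (i + m).toNat < w.length := by rw [hwlen]; omega
    have h2 := occursAt_iff'.mp hz (i + m).toNat hj
    rw [hwget _ hj] at h2
    have hcast : ((i + (m:ℤ)).toNat : ℤ) = i + m := Int.toNat_of_nonneg (by omega)
    rw [hcast] at h2
    rw [show i₀ + (i + (m:ℤ)) = i by rw [hi₀def]; ring] at h2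
    rw [h2]
    exact (hIu i hi).2
  -- it suffices to prove the cylinder has positive measure
  suffices hpos : 0 < μ {z : ℤ → A | occursAt z w i₀} by
    exact lt_of_lt_of_le hpos (measure_mono hsub2)
  by_contra hnull
  have h0 : μ {z : ℤ → A | occursAt z w i₀} = 0 := le_zero_iff.mp (not_lt.mp hnull)
  -- measurability of cylinders and the shift
  have hOccMeas : ∀ (i : ℤ) (v : List A), MeasurableSet {z : ℤ → A | occursAt z v i} := by
    intro i v
    have : {z : ℤ → A | occursAt z v i} =
        ⋂ j : Fin v.length, (fun z : ℤ → A => z (i + j.1)) ⁻¹' {v.get j} := by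
      ext z; simp [occursAt, Set.mem_iInter]
    rw [this]
    exact MeasurableSet.iInter (fun j =>
      (measurable_pi_apply _) ((isOpen_discrete _).measurableSet))
  have hOccOpen : ∀ (i : ℤ) (v : List A), IsOpen {z : ℤ → A | occursAt z v i} := by
    intro i v
    have : {z : ℤ → A | occursAt z v i} =
        ⋂ j : Fin v.length, (fun z : ℤ → A => z (i + j.1)) ⁻¹' {v.get j} := by
      ext z; simp [occursAt, Set.mem_iInter]
    rw [this]
    exact isOpen_iInter_of_finite (fun j =>
      (continuous_apply _).isOpen_preimage _ (isOpen_discrete _))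
  have hshiftMeas : ∀ k : ℤ, Measurable (shiftZ k : (ℤ → A) → (ℤ → A)) :=
    fun k => measurable_pi_lambda _ (fun n => measurable_pi_apply (n + k))
  -- shift invariance of μ in both directions
  have hinv1 : ∀ S : Set (ℤ → A), MeasurableSet S → μ (shiftZ 1 ⁻¹' S) = μ S := by
    intro S hS
    conv_rhs => rw [← hμinv]
    rw [Measure.map_apply (hshiftMeas 1) hS]
  have hinvneg : ∀ S : Set (ℤ → A), MeasurableSet S → μ (shiftZ (-1) ⁻¹' S) = μ S := by
    intro S hS
    have hcomp : shiftZ (1:ℤ) ⁻¹' (shiftZ (-1:ℤ) ⁻¹' S) = S := by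
      rw [← Set.preimage_comp]
      have : (shiftZ (-1:ℤ)) ∘ (shiftZ (1:ℤ)) = (id : (ℤ → A) → _) := by
        funext z n; show z (n + -1 + 1) = z n; congr 1; ring
      rw [this, Set.preimage_id]
    have h2 := hinv1 (shiftZ (-1:ℤ) ⁻¹' S) ((hshiftMeas (-1)) hS)
    rw [hcomp] at h2
    exact h2.symm
  have hinv : ∀ (k : ℤ) (S : Set (ℤ → A)), MeasurableSet S → μ (shiftZ k ⁻¹' S) = μ S := by
    intro k
    induction k using Int.induction_on with
    | zero =>
      intro S hS
      have : shiftZ (0:ℤ) ⁻¹' S = S := by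
        have : (shiftZ (0:ℤ)) = (id : (ℤ → A) → _) := by
          funext z n; show z (n + 0) = z n; congr 1; ring
        rw [this, Set.preimage_id]
      rw [this]
    | succ k ih =>
      intro S hS
      have hcomp : shiftZ ((k:ℤ)+1) ⁻¹' S = shiftZ 1 ⁻¹' (shiftZ (k:ℤ) ⁻¹' S) := by
        rw [← Set.preimage_comp]
        have : (shiftZ (k:ℤ) : (ℤ → A) → _) ∘ (shiftZ (1:ℤ)) = shiftZ ((k:ℤ)+1) := by
          funext z n; simp only [Function.comp_apply, shiftZ]; congr 1; ring
        rw [this]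
      rw [hcomp, hinv1 _ ((hshiftMeas k) hS), ih S hS]
    | pred k ih =>
      intro S hS
      have hcomp : shiftZ (-(k:ℤ)-1) ⁻¹' S = shiftZ (-1) ⁻¹' (shiftZ (-(k:ℤ)) ⁻¹' S) := by
        rw [← Set.preimage_comp]
        have : (shiftZ (-(k:ℤ)) : (ℤ → A) → _) ∘ (shiftZ (-1:ℤ)) = shiftZ (-(k:ℤ)-1) := by
          funext z n; simp only [Function.comp_apply, shiftZ]; congr 1; ring
        rw [this]
      rw [hcomp, hinvneg _ ((hshiftMeas (-(k:ℤ))) hS), ih S hS]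
  -- all translates of the cylinder are null
  have hOcc0 : ∀ i : ℤ, μ {z : ℤ → A | occursAt z w i} = 0 := by
    intro i
    have he : {z : ℤ → A | occursAt z w i} = shiftZ (i - i₀) ⁻¹' {z | occursAt z w i₀} := by
      ext z
      simp only [Set.mem_preimage, Set.mem_setOf_eq, occursAt_shiftZ]
      rw [show i₀ + (i - i₀) = i by ring]
    rw [he, hinv _ _ (hOccMeas i₀ w), h0]
  -- the w-avoiding subshift
  set Xp : Set (ℤ → A) := {z | z ∈ X ∧ ∀ i : ℤ, ¬ occursAt z w i} with hXpdef
  have hμXp : 1 ≤ μ Xp := by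
    have hUnull : μ (⋃ i : ℤ, {z : ℤ → A | occursAt z w i}) = 0 :=
      measure_iUnion_null (fun i => hOcc0 i)
    have hsubX : X ⊆ Xp ∪ ⋃ i : ℤ, {z : ℤ → A | occursAt z w i} := by
      intro z hz
      by_cases h : ∀ i : ℤ, ¬ occursAt z w i
      · exact Or.inl ⟨hz, h⟩
      · push_neg at h
        obtain ⟨i, hi⟩ := h
        exact Or.inr (Set.mem_iUnion.mpr ⟨i, hi⟩)
    calc (1:ENNReal) = μ X := hμconc.symm
      _ ≤ μ (Xp ∪ ⋃ i : ℤ, {z : ℤ → A | occursAt z w i}) := measure_mono hsubX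
      _ ≤ μ Xp + μ (⋃ i : ℤ, {z : ℤ → A | occursAt z w i}) := measure_union_le _ _
      _ = μ Xp := by rw [hUnull, add_zero]
  -- its image is compact, closed, and carries all of ν
  have hπcont : Continuous (fun x : ℤ → A => Q ∘ x) := by
    apply continuous_pi
    intro n
    exact (continuous_of_discreteTopology (f := Q)).comp (continuous_apply n)
  have hπmeas : Measurable (fun x : ℤ → A => Q ∘ x) := hπcont.measurable
  have hXpclosed : IsClosed Xp := by
    have : Xp = X ∩ ⋂ i : ℤ, {z : ℤ → A | occursAt z w i}ᶜ := by
      ext z; simp [hXpdef, Set.mem_iInter]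
    rw [this]
    exact hX.1.inter (isClosed_iInter (fun i => (hOccOpen i w).isClosed_compl))
  have hXpcompact : IsCompact Xp := hXpclosed.isCompact
  set K : Set (ℤ → B) := (fun x : ℤ → A => Q ∘ x) '' Xp with hKdef
  have hKcompact : IsCompact K := hXpcompact.image hπcont
  have hKclosed : IsClosed K := hKcompact.isClosed
  have hKmeas : MeasurableSet K := hKclosed.measurableSet
  have hνK : ν K = 1 := by
    refine le_antisymm prob_le_one ?_
    rw [← hlift, Measure.map_apply hπmeas hKmeas]
    calc (1:ENNReal) ≤ μ Xp := hμXp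
      _ ≤ μ ((fun x : ℤ → A => Q ∘ x) ⁻¹' K) :=
          measure_mono (Set.subset_preimage_image _ _)
  have hνKc : ν Kᶜ = 0 := by
    rw [measure_compl hKmeas (measure_ne_top ν K), hνK, measure_univ]
    simp
  -- a doubly transitive point of X through w
  obtain ⟨xst, hxstX, hxstDT, hxstw⟩ := exists_doublyTransitive hX hXirr hwX hwne
  have hystY : (Q ∘ xst) ∈ Y := by
    rw [← hfactor]; exact ⟨xst, hxstX, rfl⟩
  have hystDT : DoublyTransitive Y (Q ∘ xst) := doublyTransitive_image Q hfactor hxstX hxstDT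
  obtain ⟨xu, hxu, huni⟩ := hai (Q ∘ xst) hystY hystDT
  have hystK : (Q ∘ xst) ∈ K := by
    by_contra hnot
    have hpos := hνsupp Kᶜ hKclosed.isOpen_compl ⟨Q ∘ xst, hnot, hystY⟩
    rw [hνKc] at hpos
    exact lt_irrefl 0 hpos
  obtain ⟨xp, hxpXp, hxpy⟩ := hystK
  have h1 : xp = xst := by
    have e1 := huni xp ⟨hxpXp.1, hxpy⟩
    have e2 := huni xst ⟨hxstX, rfl⟩
    rw [e1, e2]
  exact hxpXp.2 0 (by rw [h1]; exact hxstw)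

/-- let `π = Q ∘ ·` be an almost invertible one-block factor code with magic
symbol `b` from an irreducible SFT `X` onto a sofic shift `Y`. Let `ν` be a fully
supported, shift-invariant, ergodic, `T_Y`-nonsingular measure on `Y`, and let `μ` be any
shift-invariant measure on `X` with `π_* μ = ν`. Then `μ` has full support on `X`. -/
theorem stmt19 {A B : Type*} [Fintype A] [TopologicalSpace A] [DiscreteTopology A]
    [MeasurableSpace A] [BorelSpace A]
    [Fintype B] [TopologicalSpace B] [DiscreteTopology B]
    [MeasurableSpace B] [BorelSpace B]
    (X : Set (ℤ → A)) (hX : IsShiftSpace X) (hSFT : IsSFT X) (hXirr : IrreducibleShift X)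
    (Y : Set (ℤ → B)) (hY : IsShiftSpace Y)
    (Q : A → B) (hfactor : (fun x => Q ∘ x) '' X = Y)
    (hai : ∀ y ∈ Y, DoublyTransitive Y y → ∃! x, x ∈ X ∧ Q ∘ x = y)
    (b : B) (hb : InLanguage Y [b]) (a : A) (hab : Q a = b)
    (huniq : ∀ a' : A, Q a' = b → a' = a)
    (ν : Measure (ℤ → B)) (hνprob : IsProbabilityMeasure ν) (hνconc : ν Y = 1)
    (hνerg : Ergodic (shiftZ 1) ν) (hνsupp : FullSupportOn ν Y)
    (hνns : NonsingularFor ν (GibbsRel Y))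
    (μ : Measure (ℤ → A)) (hμprob : IsProbabilityMeasure μ) (hμconc : μ X = 1)
    (hμinv : μ.map (shiftZ 1) = μ) (hlift : μ.map (fun x => Q ∘ x) = ν) :
    FullSupportOn μ X :=
  stmt19' X hX hXirr Y Q hfactor hai ν hνprob hνsupp μ hμprob hμconc hμinv hlift
end
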